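/- arXiv:1606.08153 — 3 statements merged into one kernel-verified Lean document; each statement's English description precedes it below -/
import Mathlib

section
/- For all real x with 0 < x ≤ 1/108, the series ∑_{n≥0} S_n x^n converges and equals sin((2/3)·arcsin(6√(3x)))/(8√(3x)), where S_0 = 1/2 and S_n = C(6n,3n)·C(3n,n)/(2(2n+1)·C(2n,n)) for n ≥ 1. -/
open Real Set Nat Filter Topology

/-- Real-valued sequence with `S 0 = 1/2` and
`S n = C(6n,3n)·C(3n,n)/(2(2n+1)·C(2n,n))` for `n ≥ 1`. -/
noncomputable def S (n : ℕ) : ℝ :=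
  if n = 0 then 1 / 2 else
    (Nat.choose (6 * n) (3 * n) * Nat.choose (3 * n) n : ℝ)
      / (2 * (2 * n + 1) * Nat.choose (2 * n) n)

noncomputable def c : ℕ → ℝ
  | 0 => 2/3
  | n+1 => c n * ((2*n+1:ℝ)^2 - 4/9) / ((2*n+3)*(2*n+2))

lemma ratio_pos (n : ℕ) : (0:ℝ) < (2*(n:ℝ)+1)^2 - 4/9 := by
  have : (0:ℝ) ≤ n := Nat.cast_nonneg n
  nlinarith

lemma c_pos (n : ℕ) : 0 < c n := by
  induction n with
  | zero => norm_num [c]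
  | succ n ih =>
    have h1 := ratio_pos n
    have h2 : (0:ℝ) < (2*(n:ℝ)+3)*(2*(n:ℝ)+2) := by positivity
    show 0 < c n * ((2*n+1:ℝ)^2 - 4/9) / ((2*n+3)*(2*n+2))
    positivity

lemma S_ratio (n : ℕ) : S (n+1) * ((2*n+3)*(n+1)) = S n * (6*(6*n+1)*(6*n+5)) := by
  rcases Nat.eq_zero_or_pos n with rfl | hn
  · norm_num [S, Nat.choose]
  · have h1 : n ≠ 0 := hn.ne'
    have e1 : (Nat.choose (6*(n+1)) (3*(n+1)) : ℝ)
        = (6*n+6)! / (((3*n+3)! : ℝ) * (3*n+3)!) := by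
      rw [show 6*(n+1) = 6*n+6 by ring, show 3*(n+1) = 3*n+3 by ring,
        Nat.cast_choose ℝ (by omega : 3*n+3 ≤ 6*n+6), show 6*n+6 - (3*n+3) = 3*n+3 by omega]
    have e2 : (Nat.choose (3*(n+1)) (n+1) : ℝ) = (3*n+3)! / (((n+1)! : ℝ) * (2*n+2)!) := by
      rw [show 3*(n+1) = 3*n+3 by ring,
        Nat.cast_choose ℝ (by omega : n+1 ≤ 3*n+3), show 3*n+3 - (n+1) = 2*n+2 by omega]
    have e3 : (Nat.choose (2*(n+1)) (n+1) : ℝ) = (2*n+2)! / (((n+1)! : ℝ) * (n+1)!) := by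
      rw [show 2*(n+1) = 2*n+2 by ring,
        Nat.cast_choose ℝ (by omega : n+1 ≤ 2*n+2), show 2*n+2 - (n+1) = n+1 by omega]
    have e4 : (Nat.choose (6*n) (3*n) : ℝ) = (6*n)! / (((3*n)! : ℝ) * (3*n)!) := by
      rw [Nat.cast_choose ℝ (by omega : 3*n ≤ 6*n), show 6*n - 3*n = 3*n by omega]
    have e5 : (Nat.choose (3*n) n : ℝ) = (3*n)! / (((n)! : ℝ) * (2*n)!) := by
      rw [Nat.cast_choose ℝ (by omega : n ≤ 3*n), show 3*n - n = 2*n by omega]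
    have e6 : (Nat.choose (2*n) n : ℝ) = (2*n)! / (((n)! : ℝ) * (n)!) := by
      rw [Nat.cast_choose ℝ (by omega : n ≤ 2*n), show 2*n - n = n by omega]
    have f1 : ((6*n+6)! : ℝ)
        = (6*(n:ℝ)+6)*(6*n+5)*(6*n+4)*(6*n+3)*(6*n+2)*(6*n+1)*((6*n)! : ℝ) := by
      rw [show 6*n+6 = (6*n+5)+1 by ring, Nat.factorial_succ,
        show 6*n+5 = (6*n+4)+1 by ring, Nat.factorial_succ,
        show 6*n+4 = (6*n+3)+1 by ring, Nat.factorial_succ,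
        show 6*n+3 = (6*n+2)+1 by ring, Nat.factorial_succ,
        show 6*n+2 = (6*n+1)+1 by ring, Nat.factorial_succ,
        show 6*n+1 = (6*n)+1 by ring, Nat.factorial_succ]
      push_cast; ring
    have f2 : ((3*n+3)! : ℝ) = (3*(n:ℝ)+3)*(3*n+2)*(3*n+1)*((3*n)! : ℝ) := by
      rw [show 3*n+3 = (3*n+2)+1 by ring, Nat.factorial_succ,
        show 3*n+2 = (3*n+1)+1 by ring, Nat.factorial_succ,
        show 3*n+1 = (3*n)+1 by ring, Nat.factorial_succ]
      push_cast; ring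
    have f3 : ((2*n+2)! : ℝ) = (2*(n:ℝ)+2)*(2*n+1)*((2*n)! : ℝ) := by
      rw [show 2*n+2 = (2*n+1)+1 by ring, Nat.factorial_succ,
        show 2*n+1 = (2*n)+1 by ring, Nat.factorial_succ]
      push_cast; ring
    have f4 : ((n+1)! : ℝ) = ((n:ℝ)+1)*((n)! : ℝ) := by
      rw [Nat.factorial_succ]; push_cast; ring
    have p1 : ((6*n)! : ℝ) ≠ 0 := by positivity
    have p2 : ((3*n)! : ℝ) ≠ 0 := by positivity
    have p3 : ((2*n)! : ℝ) ≠ 0 := by positivity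
    have p4 : ((n)! : ℝ) ≠ 0 := by positivity
    have p5 : (0:ℝ) < n := by exact_mod_cast hn
    rw [S, S, if_neg (by omega : n+1 ≠ 0), if_neg h1]
    push_cast
    rw [e1, e2, e3, e4, e5, e6, f1, f2, f3, f4]
    have q1 : (2*(2*((n:ℝ)+1)+1)*((2*(n:ℝ)+2)*(2*n+1)*((2*n)! : ℝ)
        / (((n:ℝ)+1)*((n)! : ℝ)*(((n:ℝ)+1)*((n)! : ℝ))))) ≠ 0 := by positivity
    field_simp
    ring

lemma c_succ (n : ℕ) : c (n+1) = c n * ((2*n+1:ℝ)^2 - 4/9) / ((2*n+3)*(2*n+2)) := rfl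

lemma S_eq_c (n : ℕ) : S n = 3/4 * c n * 108^n := by
  induction n with
  | zero => norm_num [S, c]
  | succ n ih =>
    have h := S_ratio n
    have hne : ((2*(n:ℝ)+3)*((n:ℝ)+1)) ≠ 0 := by positivity
    have hne2 : ((2*(n:ℝ)+3)*(2*(n:ℝ)+2)) ≠ 0 := by positivity
    have hS : S (n+1) = S n * (6*(6*n+1)*(6*n+5)) / ((2*n+3)*(n+1)) := by
      field_simp; linarith [h]
    rw [hS, ih, c_succ]
    field_simp
    ring

lemma c_le (n : ℕ) : c n ≤ 2/3 := by
  induction n with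
  | zero => norm_num [c]
  | succ n ih =>
    rw [c_succ]
    have h2 : (0:ℝ) < (2*(n:ℝ)+3)*(2*(n:ℝ)+2) := by positivity
    have h3 : ((2*(n:ℝ)+1)^2 - 4/9) ≤ (2*(n:ℝ)+3)*(2*(n:ℝ)+2) := by nlinarith [Nat.cast_nonneg (α := ℝ) n]
    have := c_pos n
    rw [div_le_iff₀ h2] at *
    calc c n * ((2*n+1:ℝ)^2 - 4/9) ≤ c n * ((2*(n:ℝ)+3)*(2*(n:ℝ)+2)) := by nlinarith
    _ ≤ 2/3 * ((2*(n:ℝ)+3)*(2*(n:ℝ)+2)) := by nlinarith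

lemma c_bound (n : ℕ) : c n ≤ (2/3) / ((2*n+1) * Real.sqrt (2*n+1)) := by
  induction n with
  | zero => norm_num [c]
  | succ n ih =>
    have hx : (0:ℝ) < 2*(n:ℝ)+1 := by positivity
    have hy : (0:ℝ) < 2*(n:ℝ)+3 := by positivity
    set s1 := Real.sqrt (2*(n:ℝ)+1) with hs1
    set s3 := Real.sqrt (2*(n:ℝ)+3) with hs3
    have hs1p : 0 < s1 := Real.sqrt_pos.2 hx
    have hs3p : 0 < s3 := Real.sqrt_pos.2 hy
    have hq1 : s1^2 = 2*(n:ℝ)+1 := Real.sq_sqrt hx.le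
    have hq3 : s3^2 = 2*(n:ℝ)+3 := Real.sq_sqrt hy.le
    have key : s1 * s3 ≤ 2*(n:ℝ)+2 := by
      have h := Real.sqrt_le_sqrt (show (2*(n:ℝ)+1)*(2*(n:ℝ)+3) ≤ (2*(n:ℝ)+2)^2 by nlinarith)
      rw [Real.sqrt_mul hx.le, Real.sqrt_sq (by positivity)] at h
      exact h
    rw [c_succ]
    push_cast
    rw [show (2*((n:ℝ)+1)+1) = 2*(n:ℝ)+3 by ring]
    have h1 : c n * ((2*(n:ℝ)+1)^2 - 4/9) ≤ (2/3) / ((2*(n:ℝ)+1) * s1) * ((2*(n:ℝ)+1)^2) := by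
      have := c_pos n
      have h2 := ratio_pos n
      apply mul_le_mul ih (by nlinarith) (by nlinarith) (by positivity)
    have step1 : c n * ((2*(n:ℝ)+1)^2 - 4/9) / ((2*(n:ℝ)+3)*(2*(n:ℝ)+2))
        ≤ (2/3) / ((2*(n:ℝ)+1) * s1) * ((2*(n:ℝ)+1)^2) / ((2*(n:ℝ)+3)*(2*(n:ℝ)+2)) :=
      div_le_div_of_nonneg_right h1 (by positivity)
    refine step1.trans ?_
    have e1 : (2/3) / ((2*(n:ℝ)+1) * s1) * ((2*(n:ℝ)+1)^2) / ((2*(n:ℝ)+3)*(2*(n:ℝ)+2))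
        = (2/3) * (s1^2)^2 / (s1^3 * (s3^2 * (s1^2+1))) := by
      rw [hq1, hq3]
      field_simp
      ring_nf
      rw [hq1]
      ring
    rw [e1]
    rw [div_le_div_iff₀ (by positivity) (by positivity)]
    have k2 : s1^4 * s3^3 ≤ s1^3 * s3^2 * (s1^2+1) := by
      have h3 := mul_le_mul_of_nonneg_left key (show (0:ℝ) ≤ s1^3 * s3^2 by positivity)
      calc s1^4*s3^3 = (s1^3*s3^2) * (s1*s3) := by ring
        _ ≤ (s1^3*s3^2) * (2*(n:ℝ)+2) := h3
        _ = s1^3*s3^2 * (s1^2+1) := by rw [hq1]; ring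
    calc (2/3) * (s1^2)^2 * ((2*(n:ℝ)+3) * s3) = 2/3 * (s1^4 * s3^3) := by rw [← hq3]; ring
      _ ≤ 2/3 * (s1^3 * s3^2 * (s1^2+1)) := by linarith
      _ = 2/3 * (s1^3 * (s3^2*(s1^2+1))) := by ring

lemma summable_c : Summable c := by
  have hs : Summable (fun n : ℕ => ((n+1 : ℝ)) ^ (-(3/2) : ℝ)) := by
    have h := (summable_nat_rpow (p := -(3/2))).2 (by norm_num)
    exact_mod_cast (summable_nat_add_iff 1).2 h
  apply Summable.of_nonneg_of_le (fun n => (c_pos n).le) (fun n => ?_) (hs.mul_left (2/3))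
  refine (c_bound n).trans ?_
  have h1 : (0:ℝ) < (n:ℝ)+1 := by positivity
  have h2 : ((n:ℝ)+1) ≤ 2*(n:ℝ)+1 := by linarith [Nat.cast_nonneg (α := ℝ) n]
  have e : ((n+1:ℝ)) ^ (-(3/2) : ℝ) = 1 / (((n:ℝ)+1) * Real.sqrt ((n:ℝ)+1)) := by
    rw [Real.rpow_neg h1.le, show (3/2 : ℝ) = 1 + 1/2 by norm_num, Real.rpow_add h1,
      Real.rpow_one, ← Real.sqrt_eq_rpow]
    rw [one_div]
  rw [e, mul_one_div]
  apply div_le_div_of_nonneg_left (by norm_num) (by positivity)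
  exact mul_le_mul h2 (Real.sqrt_le_sqrt (by linarith)) (Real.sqrt_nonneg _) (by positivity)

lemma c_succ' (n : ℕ) :
    c (n+1) * ((2*(n:ℝ)+3)*(2*(n:ℝ)+2)) = c n * ((2*(n:ℝ)+1)^2 - 4/9) := by
  rw [c_succ]
  have h : ((2*(n:ℝ)+3)*(2*(n:ℝ)+2)) ≠ 0 := by positivity
  field_simp

noncomputable def F (u : ℝ) : ℝ := ∑' n, c n * u^(2*n+1)
noncomputable def F1 (u : ℝ) : ℝ := ∑' n : ℕ, ((2*n+1 : ℝ) * c n) * u^(2*n)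
noncomputable def F2 (u : ℝ) : ℝ := ∑' n : ℕ, ((2*n+3 : ℝ)*(2*n+2) * c (n+1)) * u^(2*n+1)

lemma summable_master {u : ℝ} (hu : |u| < 1) (a : ℕ → ℝ) (e : ℕ → ℕ)
    (ha : ∀ n, |a n| ≤ (2*(n:ℝ)+3)^2) (he : ∀ n, n ≤ e n) :
    Summable (fun n => a n * u^(e n)) := by
  have h2 := summable_pow_mul_geometric_of_norm_lt_one (R := ℝ) 2
    (r := |u|) (by rwa [Real.norm_eq_abs, abs_abs])
  have h1 := summable_pow_mul_geometric_of_norm_lt_one (R := ℝ) 1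
    (r := |u|) (by rwa [Real.norm_eq_abs, abs_abs])
  have h0 := summable_pow_mul_geometric_of_norm_lt_one (R := ℝ) 0
    (r := |u|) (by rwa [Real.norm_eq_abs, abs_abs])
  have hb : Summable (fun n : ℕ => (2*(n:ℝ)+3)^2 * |u|^n) := by
    refine Summable.congr (((h2.mul_left 4).add (h1.mul_left 12)).add (h0.mul_left 9)) ?_
    intro n; push_cast; ring
  refine Summable.of_norm_bounded hb (fun n => ?_)
  rw [norm_mul, norm_pow, Real.norm_eq_abs, Real.norm_eq_abs]
  have hle : |u|^(e n) ≤ |u|^n := pow_le_pow_of_le_one (abs_nonneg u) hu.le (he n)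
  have : (0:ℝ) ≤ |u|^(e n) := by positivity
  apply mul_le_mul (ha n) hle this (by positivity)

lemma abs_c_le (n : ℕ) : |c n| ≤ 2/3 := by
  rw [abs_of_pos (c_pos n)]; exact c_le n

lemma coeff_bound1 (n : ℕ) : |c n| ≤ (2*(n:ℝ)+3)^2 := by
  refine (abs_c_le n).trans ?_
  nlinarith [Nat.cast_nonneg (α := ℝ) n]

lemma coeff_bound2 (n : ℕ) : |(2*(n:ℝ)+1) * c n| ≤ (2*(n:ℝ)+3)^2 := by
  rw [abs_mul]
  have h1 : |(2*(n:ℝ)+1)| = 2*(n:ℝ)+1 := abs_of_pos (by positivity)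
  rw [h1]
  calc (2*(n:ℝ)+1) * |c n| ≤ (2*(n:ℝ)+1) * 1 := by
        have := abs_c_le n
        have h2 : (0:ℝ) ≤ 2*(n:ℝ)+1 := by positivity
        nlinarith
    _ ≤ (2*(n:ℝ)+3)^2 := by nlinarith [Nat.cast_nonneg (α := ℝ) n]

lemma coeff_bound3 (n : ℕ) : |(2*(n:ℝ)+3)*(2*(n:ℝ)+2) * c (n+1)| ≤ (2*(n:ℝ)+3)^2 := by
  rw [abs_mul, abs_mul]
  have h1 : |(2*(n:ℝ)+3)| = 2*(n:ℝ)+3 := abs_of_pos (by positivity)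
  have h2 : |(2*(n:ℝ)+2)| = 2*(n:ℝ)+2 := abs_of_pos (by positivity)
  rw [h1, h2]
  have h3 := abs_c_le (n+1)
  have h4 : (0:ℝ) ≤ |c (n+1)| := abs_nonneg _
  nlinarith [Nat.cast_nonneg (α := ℝ) n]

lemma coeff_bound4 (n : ℕ) : |(2*(n:ℝ))*((2*(n:ℝ)+1) * c n)| ≤ (2*(n:ℝ)+3)^2 := by
  rw [abs_mul, abs_mul, abs_mul]
  have h0 : |(2:ℝ)| = 2 := by norm_num
  have h1 : |(n:ℝ)| = (n:ℝ) := abs_of_nonneg (by positivity)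
  have h2 : |(2*(n:ℝ)+1)| = 2*(n:ℝ)+1 := abs_of_pos (by positivity)
  rw [h0, h1, h2]
  have h3 := abs_c_le n
  have h4 : (0:ℝ) ≤ |c n| := abs_nonneg _
  nlinarith [Nat.cast_nonneg (α := ℝ) n]

lemma summable_F {u : ℝ} (hu : |u| < 1) : Summable (fun n => c n * u^(2*n+1)) :=
  summable_master hu _ _ coeff_bound1 (fun n => by omega)

lemma summable_F1 {u : ℝ} (hu : |u| < 1) : Summable (fun n : ℕ => ((2*n+1 : ℝ) * c n) * u^(2*n)) :=
  summable_master hu _ _ coeff_bound2 (fun n => by omega)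

lemma summable_F2 {u : ℝ} (hu : |u| < 1) :
    Summable (fun n : ℕ => ((2*n+3 : ℝ)*(2*n+2) * c (n+1)) * u^(2*n+1)) :=
  summable_master hu _ _ coeff_bound3 (fun n => by omega)

lemma summable_D {u : ℝ} (hu : |u| < 1) :
    Summable (fun n : ℕ => ((2*n+1 : ℝ)*(2*n) * c n) * u^(2*n+1)) := by
  refine summable_master hu _ _ (fun n => ?_) (fun n => by omega)
  have := coeff_bound4 n
  calc |(2*(n:ℝ)+1)*(2*(n:ℝ)) * c n| = |(2*(n:ℝ))*((2*(n:ℝ)+1) * c n)| := by ring_nf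
    _ ≤ _ := this

lemma hasDerivAt_F {u : ℝ} (hu : |u| < 1) : HasDerivAt F (F1 u) u := by
  set r : ℝ := (|u|+1)/2 with hr
  have hr1 : r < 1 := by rw [hr]; linarith
  have hrpos : 0 < r := by rw [hr]; positivity
  have hur : |u| < r := by rw [hr]; linarith
  have hrabs : |r| < 1 := by rwa [abs_of_pos hrpos]
  have hb : Summable (fun n : ℕ => ((2*(n:ℝ)+3)^2) * r^n) := by
    have := summable_master hrabs (fun n => ((2*(n:ℝ)+3)^2)) id
      (fun n => by rw [abs_of_pos (by positivity)]) (fun n => le_refl n)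
    simpa using this
  have hmemu : u ∈ Ioo (-r) r := by
    constructor <;> [linarith [neg_abs_le u]; linarith [le_abs_self u]]
  have hmem0 : (0:ℝ) ∈ Ioo (-r) r := ⟨by linarith, by linarith⟩
  unfold F F1
  refine hasDerivAt_tsum_of_isPreconnected hb (isOpen_Ioo (a := -r) (b := r))
    (convex_Ioo _ _).isPreconnected
    (g' := fun (n : ℕ) (y : ℝ) => ((2*n+1 : ℝ) * c n) * y^(2*n))
    (fun n y _ => ?_) (fun n y hy => ?_) hmem0 ?_ hmemu
  · have h := (hasDerivAt_pow (2*n+1) y).const_mul (c n)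
    refine h.congr_deriv ?_
    have h2 : 2*n+1-1 = 2*n := by omega
    rw [h2]
    push_cast
    ring
  · rw [norm_mul, norm_pow, Real.norm_eq_abs, Real.norm_eq_abs]
    have h1 : |y| ≤ r := by
      rcases hy with ⟨h2, h3⟩
      rw [abs_le]; constructor <;> linarith
    calc |(2*(n:ℝ)+1) * c n| * |y|^(2*n) ≤ (2*(n:ℝ)+3)^2 * r^n := by
          apply mul_le_mul (coeff_bound2 n) ?_ (by positivity) (by positivity)
          calc |y|^(2*n) ≤ r^(2*n) := pow_le_pow_left₀ (abs_nonneg y) h1 _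
            _ ≤ r^n := pow_le_pow_of_le_one hrpos.le hr1.le (by omega)
      _ = _ := rfl
  · apply summable_of_ne_finset_zero (s := {0})
    intro n hn
    simp only [Finset.mem_singleton] at hn
    have h0 : n ≠ 0 := hn
    have : (0:ℝ)^(2*n+1) = 0 := zero_pow (by omega)
    simp [this]

lemma summable_E {u : ℝ} (hu : |u| < 1) :
    Summable (fun n : ℕ => ((2*n : ℝ) * ((2*n+1 : ℝ) * c n)) * u^(2*n-1)) :=
  summable_master hu _ _ coeff_bound4 (fun n => by omega)

lemma hasDerivAt_F1 {u : ℝ} (hu : |u| < 1) : HasDerivAt F1 (F2 u) u := by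
  set r : ℝ := (|u|+1)/2 with hr
  have hr1 : r < 1 := by rw [hr]; linarith
  have hrpos : 0 < r := by rw [hr]; positivity
  have hur : |u| < r := by rw [hr]; linarith
  have hrabs : |r| < 1 := by rwa [abs_of_pos hrpos]
  have hb : Summable (fun n : ℕ => ((2*(n:ℝ)+3)^2) * r^n) := by
    have := summable_master hrabs (fun n => ((2*(n:ℝ)+3)^2)) id
      (fun n => by rw [abs_of_pos (by positivity)]) (fun n => le_refl n)
    simpa using this
  have hmemu : u ∈ Ioo (-r) r := by
    constructor <;> [linarith [neg_abs_le u]; linarith [le_abs_self u]]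
  have hmem0 : (0:ℝ) ∈ Ioo (-r) r := ⟨by linarith, by linarith⟩
  have key : HasDerivAt (fun z => ∑' n : ℕ, ((2*n+1 : ℝ) * c n) * z^(2*n))
      (∑' n : ℕ, ((2*n : ℝ) * ((2*n+1 : ℝ) * c n)) * u^(2*n-1)) u := by
    refine hasDerivAt_tsum_of_isPreconnected hb (isOpen_Ioo (a := -r) (b := r))
      (convex_Ioo _ _).isPreconnected
      (g' := fun (n : ℕ) (y : ℝ) => ((2*n : ℝ) * ((2*n+1 : ℝ) * c n)) * y^(2*n-1))
      (fun n y _ => ?_) (fun n y hy => ?_) hmem0 ?_ hmemu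
    · have h := (hasDerivAt_pow (2*n) y).const_mul ((2*n+1 : ℝ) * c n)
      refine h.congr_deriv ?_
      push_cast
      ring
    · rw [norm_mul, norm_pow, Real.norm_eq_abs, Real.norm_eq_abs]
      have h1 : |y| ≤ r := by
        rcases hy with ⟨h2, h3⟩
        rw [abs_le]; constructor <;> linarith
      calc |(2*(n:ℝ)) * ((2*(n:ℝ)+1) * c n)| * |y|^(2*n-1) ≤ (2*(n:ℝ)+3)^2 * r^n := by
            apply mul_le_mul (coeff_bound4 n) ?_ (by positivity) (by positivity)
            calc |y|^(2*n-1) ≤ r^(2*n-1) := pow_le_pow_left₀ (abs_nonneg y) h1 _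
              _ ≤ r^n := pow_le_pow_of_le_one hrpos.le hr1.le (by omega)
        _ = _ := rfl
    · apply summable_of_ne_finset_zero (s := {0})
      intro n hn
      simp only [Finset.mem_singleton] at hn
      have : (0:ℝ)^(2*n) = 0 := zero_pow (by omega)
      simp [this]
  have heq : (∑' n : ℕ, ((2*n : ℝ) * ((2*n+1 : ℝ) * c n)) * u^(2*n-1)) = F2 u := by
    rw [Summable.tsum_eq_zero_add (summable_E hu)]
    simp only [Nat.cast_zero, mul_zero, zero_mul, Nat.cast_ofNat]
    rw [F2]
    rw [zero_add]
    apply tsum_congr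
    intro n
    have he : 2*(n+1)-1 = 2*n+1 := by omega
    rw [he]
    push_cast
    ring
  unfold F1
  rw [← heq]
  exact key

lemma F_ode {u : ℝ} (hu : |u| < 1) : (1 - u^2) * F2 u = u * F1 u - (4/9) * F u := by
  have SA : Summable (fun n : ℕ => (4/9 * c n) * u^(2*n+1)) := by
    refine summable_master hu _ _ (fun n => ?_) (fun n => by omega)
    calc |4/9 * c n| = 4/9 * |c n| := by rw [abs_mul]; norm_num
      _ ≤ (2*(n:ℝ)+3)^2 := by
          have := abs_c_le n
          nlinarith [Nat.cast_nonneg (α := ℝ) n, abs_nonneg (c n)]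
  have SB : Summable (fun n : ℕ => ((2*n+1 : ℝ) * c n) * u^(2*n+1)) :=
    summable_master hu _ _ coeff_bound2 (fun n => by omega)
  have SC := summable_F2 hu
  have SD := summable_D hu
  have h1 : u * F1 u = ∑' n : ℕ, ((2*n+1 : ℝ) * c n) * u^(2*n+1) := by
    rw [F1, ← tsum_mul_left]
    exact tsum_congr fun n => by rw [pow_succ]; ring
  have h2 : (4/9) * F u = ∑' n : ℕ, (4/9 * c n) * u^(2*n+1) := by
    rw [F, ← tsum_mul_left]
    exact tsum_congr fun n => by ring
  have h3 : u^2 * F2 u = ∑' n : ℕ, ((2*n+1 : ℝ)*(2*n) * c n) * u^(2*n+1) := by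
    rw [F2, ← tsum_mul_left]
    conv_rhs => rw [Summable.tsum_eq_zero_add SD]
    rw [show ((2*(0:ℕ)+1 : ℝ)*(2*(0:ℕ)) * c 0) * u^(2*0+1) = 0 by norm_num, zero_add]
    apply tsum_congr
    intro n
    rw [show 2*(n+1)+1 = (2*n+1)+2 by ring, pow_add]
    push_cast
    ring
  have L : (1 - u^2) * F2 u
      = ∑' n : ℕ, (((2*n+3 : ℝ)*(2*n+2) * c (n+1)) * u^(2*n+1)
        - ((2*n+1 : ℝ)*(2*n) * c n) * u^(2*n+1)) := by
    rw [Summable.tsum_sub SC SD, sub_mul, one_mul, h3, F2]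
  have R : u * F1 u - (4/9) * F u
      = ∑' n : ℕ, (((2*n+1 : ℝ) * c n) * u^(2*n+1) - (4/9 * c n) * u^(2*n+1)) := by
    rw [Summable.tsum_sub SB SA, h1, h2]
  rw [L, R]
  apply tsum_congr
  intro n
  have h := c_succ' n
  push_cast
  linear_combination u^(2*n+1) * h

lemma F_zero : F 0 = 0 := by
  rw [F]
  convert tsum_zero with n
  exact mul_eq_zero_of_right _ (zero_pow (by omega))

lemma F1_zero : F1 0 = 2/3 := by
  rw [F1]
  rw [tsum_eq_single 0 (fun n hn => ?_)]
  · norm_num [c]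
  · exact mul_eq_zero_of_right _ (zero_pow (by omega))

noncomputable def H (u : ℝ) : ℝ := Real.sin ((2/3) * Real.arcsin u)
noncomputable def H1 (u : ℝ) : ℝ :=
  (2/3) * Real.cos ((2/3) * Real.arcsin u) / Real.sqrt (1 - u^2)

lemma hasDerivAt_H {u : ℝ} (hu : |u| < 1) : HasDerivAt H (H1 u) u := by
  have h1 : u ≠ -1 := by intro h; rw [h] at hu; norm_num at hu
  have h2 : u ≠ 1 := by intro h; rw [h] at hu; norm_num at hu
  have ha := Real.hasDerivAt_arcsin h1 h2
  have hc := (ha.const_mul (2/3 : ℝ))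
  have hs := (Real.hasDerivAt_sin ((2/3) * Real.arcsin u)).comp u hc
  refine hs.congr_deriv ?_
  rw [H1]
  ring

lemma hasDerivAt_H1 {u : ℝ} (hu : |u| < 1) :
    HasDerivAt H1 ((u * H1 u - (4/9) * H u) / (1 - u^2)) u := by
  have h1 : u ≠ -1 := by intro h; rw [h] at hu; norm_num at hu
  have h2 : u ≠ 1 := by intro h; rw [h] at hu; norm_num at hu
  have hu2 : u^2 < 1 := by
    have := abs_lt.1 hu
    nlinarith [this.1, this.2]
  have hpos : (0:ℝ) < 1 - u^2 := by linarith
  have hs : (0:ℝ) < Real.sqrt (1 - u^2) := Real.sqrt_pos.2 hpos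
  have ha := Real.hasDerivAt_arcsin h1 h2
  have hc := ha.const_mul (2/3 : ℝ)
  -- derivative of numerator: (2/3) * cos((2/3) arcsin u)
  have hnum : HasDerivAt (fun y => (2/3) * Real.cos ((2/3) * Real.arcsin y))
      ((2/3) * (-Real.sin ((2/3) * Real.arcsin u) * ((2/3) * (1 / Real.sqrt (1 - u^2))))) u := by
    exact ((Real.hasDerivAt_cos ((2/3) * Real.arcsin u)).comp u hc).const_mul (2/3)
  -- derivative of denominator: sqrt (1 - u^2)
  have hden : HasDerivAt (fun y => Real.sqrt (1 - y^2)) (-(2*u) / (2 * Real.sqrt (1 - u^2))) u := by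
    have hinner : HasDerivAt (fun y : ℝ => 1 - y^2) (-(2*u)) u := by
      simpa using (hasDerivAt_pow 2 u).const_sub 1
    have := (Real.hasDerivAt_sqrt hpos.ne').comp u hinner
    refine this.congr_deriv ?_
    ring
  have hdiv := hnum.div hden hs.ne'
  refine hdiv.congr_deriv ?_
  rw [H1, H]
  rw [Real.sq_sqrt hpos.le]
  field_simp
  ring

noncomputable def vfield (r : ℝ) : ℝ → ℝ × ℝ → ℝ × ℝ := fun t p =>
  (p.2, ((max 0 (min t r)) * p.2 - (4/9) * p.1) / (1 - (max 0 (min t r))^2))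

lemma vfield_lipschitz {r : ℝ} (hr0 : 0 ≤ r) (hr1 : r < 1) (t : ℝ) :
    LipschitzWith (Real.toNNReal (max 1 ((r + 4/9)/(1-r^2)))) (vfield r t) := by
  have hr2 : (0:ℝ) < 1 - r^2 := by nlinarith
  apply LipschitzWith.of_dist_le_mul
  intro p q
  set s := max 0 (min t r) with hs
  have hs0 : 0 ≤ s := le_max_left _ _
  have hsr : s ≤ r := max_le hr0 (min_le_right _ _)
  have hs2 : 1 - r^2 ≤ 1 - s^2 := by nlinarith
  have hs2pos : (0:ℝ) < 1 - s^2 := lt_of_lt_of_le hr2 hs2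
  have hKc : ((Real.toNNReal (max 1 ((r + 4/9)/(1-r^2)))) : ℝ) = max 1 ((r + 4/9)/(1-r^2)) :=
    Real.coe_toNNReal _ (le_trans zero_le_one (le_max_left _ _))
  rw [hKc, Prod.dist_eq, Prod.dist_eq]
  set d := max (dist p.1 q.1) (dist p.2 q.2) with hd
  have hd0 : 0 ≤ d := le_trans dist_nonneg (le_max_left _ _)
  have h1 : dist p.1 q.1 ≤ d := le_max_left _ _
  have h2 : dist p.2 q.2 ≤ d := le_max_right _ _
  have hK1 : (1:ℝ) ≤ max 1 ((r + 4/9)/(1-r^2)) := le_max_left _ _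
  apply max_le
  · calc dist (vfield r t p).1 (vfield r t q).1 = dist p.2 q.2 := rfl
      _ ≤ d := h2
      _ ≤ max 1 ((r + 4/9)/(1-r^2)) * d := by nlinarith
  · have e1 : dist (vfield r t p).2 (vfield r t q).2
        = |(s * (p.2 - q.2) - (4/9) * (p.1 - q.1)) / (1 - s^2)| := by
      rw [Real.dist_eq, vfield, vfield]
      simp only [← hs]
      congr 1
      field_simp
      ring
    rw [e1, abs_div, abs_of_pos hs2pos, div_le_iff₀ hs2pos]
    have e2 : |s * (p.2 - q.2) - (4/9) * (p.1 - q.1)|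
        ≤ r * dist p.2 q.2 + (4/9) * dist p.1 q.1 := by
      refine (abs_sub _ _).trans ?_
      rw [abs_mul, abs_mul, Real.dist_eq, Real.dist_eq]
      have : |s| = s := abs_of_nonneg hs0
      rw [this]
      have h4 : |(4:ℝ)/9| = 4/9 := by norm_num
      rw [h4]
      have := abs_nonneg (p.2 - q.2)
      nlinarith [abs_nonneg (p.1 - q.1)]
    refine e2.trans ?_
    have hdivle : (r + 4/9)/(1-r^2) ≤ max 1 ((r + 4/9)/(1-r^2)) := le_max_right _ _
    have step : r * dist p.2 q.2 + (4/9) * dist p.1 q.1 ≤ (r + 4/9) * d := by nlinarith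
    refine step.trans ?_
    have hKd : 0 ≤ (max 1 ((r + 4/9)/(1-r^2))) * d := by positivity
    have c1 : (r + 4/9) * d = ((r + 4/9)/(1-r^2)) * d * (1-r^2) := by field_simp
    have c2 : ((r + 4/9)/(1-r^2)) * d * (1-r^2) ≤ (max 1 ((r + 4/9)/(1-r^2))) * d * (1-r^2) := by
      have := mul_le_mul_of_nonneg_right (mul_le_mul_of_nonneg_right hdivle hd0) hr2.le
      linarith
    have c3 : (max 1 ((r + 4/9)/(1-r^2))) * d * (1-r^2) ≤ (max 1 ((r + 4/9)/(1-r^2))) * d * (1-s^2) :=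
      mul_le_mul_of_nonneg_left hs2 hKd
    linarith

lemma arcsin_stuff : H 0 = 0 ∧ H1 0 = 2/3 := by
  constructor
  · rw [H, Real.arcsin_zero, mul_zero, Real.sin_zero]
  · rw [H1, Real.arcsin_zero, mul_zero, Real.cos_zero]
    norm_num

lemma F_eq_H {u : ℝ} (h0 : 0 ≤ u) (h1 : u < 1) : F u = H u := by
  set r : ℝ := (u+1)/2 with hrdef
  have hr0 : 0 ≤ r := by rw [hrdef]; linarith
  have hr1 : r < 1 := by rw [hrdef]; linarith
  have hur : u ≤ r := by rw [hrdef]; linarith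
  have key : EqOn (fun t => (F t, F1 t)) (fun t => (H t, H1 t)) (Icc 0 r) := by
    have habs : ∀ t ∈ Icc (0:ℝ) r, |t| < 1 := by
      intro t ht
      rw [abs_lt]
      exact ⟨by linarith [ht.1], by linarith [ht.2]⟩
    apply ODE_solution_unique_of_mem_Icc_right
      (v := vfield r) (s := fun _ => (univ : Set (ℝ × ℝ)))
      (fun t _ => (vfield_lipschitz hr0 hr1 t).lipschitzOnWith)
      ?_ ?_ (fun _ _ => trivial) ?_ ?_ (fun _ _ => trivial) ?_
    · intro t ht
      exact (((hasDerivAt_F (habs t ht)).continuousAt).prodMk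
        ((hasDerivAt_F1 (habs t ht)).continuousAt)).continuousWithinAt
    · intro t ht
      have habt : |t| < 1 := habs t (Ico_subset_Icc_self ht)
      have hd := (hasDerivAt_F habt).prodMk (hasDerivAt_F1 habt)
      have hmax : max 0 (min t r) = t := by
        rw [min_eq_left ht.2.le, max_eq_right ht.1]
      have ht2 : 1 - t^2 ≠ 0 := by
        have := abs_lt.1 habt
        nlinarith
      have heq : vfield r t ((fun t => (F t, F1 t)) t) = (F1 t, F2 t) := by
        rw [vfield]
        simp only [hmax]
        have hode := F_ode habt
        have : (t * F1 t - 4/9 * F t) / (1 - t^2) = F2 t := by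
          rw [← hode]
          field_simp
        rw [Prod.mk.injEq]
        exact ⟨rfl, this⟩
      rw [heq]
      exact hd.hasDerivWithinAt
    · intro t ht
      exact (((hasDerivAt_H (habs t ht)).continuousAt).prodMk
        ((hasDerivAt_H1 (habs t ht)).continuousAt)).continuousWithinAt
    · intro t ht
      have habt : |t| < 1 := habs t (Ico_subset_Icc_self ht)
      have hd := (hasDerivAt_H habt).prodMk (hasDerivAt_H1 habt)
      have hmax : max 0 (min t r) = t := by
        rw [min_eq_left ht.2.le, max_eq_right ht.1]
      have heq : vfield r t ((fun t => (H t, H1 t)) t) = (H1 t, (t * H1 t - (4/9) * H t) / (1 - t^2)) := by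
        rw [vfield]
        simp only [hmax]
      rw [heq]
      exact hd.hasDerivWithinAt
    · show (F 0, F1 0) = (H 0, H1 0)
      rw [F_zero, F1_zero, arcsin_stuff.1, arcsin_stuff.2]
  have := key (show u ∈ Icc 0 r from ⟨h0, hur⟩)
  exact congrArg Prod.fst this

noncomputable def L (x : ℝ) : ℝ := ∑' n, S n * x^n
noncomputable def R (x : ℝ) : ℝ :=
  Real.sin ((2/3) * Real.arcsin (6 * Real.sqrt (3*x))) / (8 * Real.sqrt (3*x))

lemma S_nonneg (n : ℕ) : 0 ≤ S n := by
  rw [S_eq_c]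
  have := c_pos n
  positivity

lemma summable_S {x : ℝ} (h0 : 0 ≤ x) (h1 : x ≤ 1/108) :
    Summable (fun n : ℕ => S n * x^n) := by
  apply Summable.of_nonneg_of_le (fun n => mul_nonneg (S_nonneg n) (pow_nonneg h0 n))
    (fun n => ?_) (summable_c.mul_left (3/4))
  rw [S_eq_c]
  have h2 : (108:ℝ)^n * x^n = (108*x)^n := by rw [mul_pow]
  have h3 : (0:ℝ) ≤ 108*x := by linarith
  have h4 : (108:ℝ)*x ≤ 1 := by linarith
  calc 3/4 * c n * 108^n * x^n = 3/4 * c n * (108*x)^n := by rw [mul_assoc, h2]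
    _ ≤ 3/4 * c n * 1 := by
        have := c_pos n
        have := pow_le_one₀ h3 h4 (n := n)
        nlinarith [pow_nonneg h3 n]
    _ = 3/4 * c n := by ring

lemma sqrt36 : Real.sqrt 36 = 6 := by
  rw [show (36:ℝ) = 6^2 by norm_num, Real.sqrt_sq (by norm_num)]

lemma six_sqrt {x : ℝ} (hx : 0 ≤ x) : 6 * Real.sqrt (3*x) = Real.sqrt (108*x) := by
  rw [show (108:ℝ)*x = 36*(3*x) by ring, Real.sqrt_mul (show (0:ℝ) ≤ 36 by norm_num) (3*x), sqrt36]

lemma L_eq_R {x : ℝ} (h0 : 0 < x) (h1 : x < 1/108) : L x = R x := by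
  set u := Real.sqrt (108*x) with hudef
  have hu108 : (0:ℝ) < 108*x := by linarith
  have hu : 0 < u := Real.sqrt_pos.2 hu108
  have hu2 : u^2 = 108*x := Real.sq_sqrt hu108.le
  have hu1 : u < 1 := by
    rw [hudef]
    rw [show (1:ℝ) = Real.sqrt 1 by rw [Real.sqrt_one]]
    exact Real.sqrt_lt_sqrt hu108.le (by linarith)
  have hFH := F_eq_H hu.le hu1
  have hF : F u = u * ∑' n : ℕ, c n * (u^2)^n := by
    rw [F, ← tsum_mul_left]
    apply tsum_congr
    intro n
    rw [← pow_mul, pow_succ]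
    ring
  have hL : L x = 3/4 * (u * ∑' n : ℕ, c n * (u^2)^n) / u := by
    rw [L, ← hF, hFH, ← hFH, hF]
    rw [mul_div_assoc, mul_comm u _, mul_div_assoc, div_self hu.ne', mul_one, ← tsum_mul_left]
    apply tsum_congr
    intro n
    rw [S_eq_c, hu2, mul_pow]
    ring
  have he6 : 6 * Real.sqrt (3*x) = u := six_sqrt h0.le
  have hs3 : Real.sqrt (3*x) = u/6 := by rw [← he6]; ring
  rw [hL, R, he6, hs3]
  have key : u * (∑' n : ℕ, c n * (u^2)^n) = Real.sin ((2/3) * Real.arcsin u) := by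
    rw [← hF, hFH]; rfl
  rw [key]
  field_simp
  ring

lemma L_continuousOn : ContinuousOn L (Icc 0 (1/108)) := by
  apply continuousOn_tsum (u := fun n => 3/4 * c n)
    (fun n => (continuous_const.mul (continuous_pow n)).continuousOn)
    (summable_c.mul_left (3/4))
  intro n x hx
  rcases hx with ⟨hx0, hx1⟩
  simp only [Pi.mul_apply]
  rw [Real.norm_eq_abs, abs_mul, abs_of_nonneg (S_nonneg n), abs_pow]
  rw [S_eq_c]
  have h2 : |x|^n ≤ (1/108)^n := by
    apply pow_le_pow_left₀ (abs_nonneg x)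
    rw [abs_of_nonneg hx0]; exact hx1
  have hc := c_pos n
  calc 3/4 * c n * 108^n * |x|^n ≤ 3/4 * c n * 108^n * (1/108)^n := by
        apply mul_le_mul_of_nonneg_left h2 (by positivity)
    _ = 3/4 * c n := by
        rw [mul_assoc, ← mul_pow]
        norm_num
lemma sqrt_at_end : Real.sqrt (3 * (1/108)) = 1/6 := by
  rw [show (3:ℝ) * (1/108) = (1/6)^2 by norm_num, Real.sqrt_sq (by norm_num)]

lemma R_continuousAt : ContinuousAt R (1/108) := by
  have hnum : Continuous (fun x : ℝ => Real.sin ((2/3) * Real.arcsin (6 * Real.sqrt (3*x)))) := by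
    apply Real.continuous_sin.comp
    apply continuous_const.mul
    apply Real.continuous_arcsin.comp
    exact continuous_const.mul (Real.continuous_sqrt.comp (continuous_const.mul continuous_id))
  have hden : Continuous (fun x : ℝ => 8 * Real.sqrt (3*x)) :=
    continuous_const.mul (Real.continuous_sqrt.comp (continuous_const.mul continuous_id))
  apply ContinuousAt.div hnum.continuousAt hden.continuousAt
  show (8:ℝ) * Real.sqrt (3*(1/108)) ≠ 0
  rw [sqrt_at_end]
  norm_num

lemma L_eq_R_end : L (1/108) = R (1/108) := by
  have hmem : (1/108 : ℝ) ∈ Icc (0:ℝ) (1/108) := ⟨by norm_num, le_refl _⟩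
  have h1 : Tendsto L (𝓝[Ioo (0:ℝ) (1/108)] (1/108)) (𝓝 (L (1/108))) :=
    (L_continuousOn.continuousWithinAt hmem).mono Ioo_subset_Icc_self
  have h2 : Tendsto R (𝓝[Ioo (0:ℝ) (1/108)] (1/108)) (𝓝 (R (1/108))) :=
    R_continuousAt.continuousWithinAt
  have heq : ∀ᶠ y in 𝓝[Ioo (0:ℝ) (1/108)] (1/108), L y = R y := by
    filter_upwards [self_mem_nhdsWithin] with y hy
    exact L_eq_R hy.1 hy.2
  have h1' : Tendsto R (𝓝[Ioo (0:ℝ) (1/108)] (1/108)) (𝓝 (L (1/108))) := h1.congr' heq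
  have : (𝓝[Ioo (0:ℝ) (1/108)] ((1:ℝ)/108)).NeBot := right_nhdsWithin_Ioo_neBot (by norm_num)
  exact tendsto_nhds_unique h1' h2

theorem S_generating_function (x : ℝ) (hx0 : 0 < x) (hx : x ≤ 1 / 108) :
    HasSum (fun n : ℕ => S n * x ^ n)
      (Real.sin ((2 / 3) * Real.arcsin (6 * Real.sqrt (3 * x))) / (8 * Real.sqrt (3 * x))) := by
  have hsum := summable_S hx0.le hx
  have key : L x = R x := by
    rcases lt_or_eq_of_le hx with h | h
    · exact L_eq_R hx0 h
    · rw [h]; exact L_eq_R_end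
  have : (∑' n : ℕ, S n * x^n)
      = Real.sin ((2 / 3) * Real.arcsin (6 * Real.sqrt (3 * x))) / (8 * Real.sqrt (3 * x)) := key
  rw [← this]
  exact hsum.hasSum
end

section
/- The series ∑_{n≥0} S_n / 108^n converges to 3√3/8, where S_0 = 1/2 and S_n = C(6n,3n)·C(3n,n)/(2(2n+1)·C(2n,n)) for n ≥ 1. -/
open Finset Real Set MeasureTheory intervalIntegral


open Finset Real

noncomputable def cc : ℕ → ℝ := fun n => ∏ k ∈ Finset.range n, ((k + 1/6) / (k + 1))
noncomputable def dd : ℕ → ℝ := fun n => ∏ k ∈ Finset.range n, ((k + 5/6) / (k + 3/2))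

lemma cc_succ (n : ℕ) : cc (n+1) = cc n * ((n + 1/6) / (n + 1)) := Finset.prod_range_succ _ _
lemma dd_succ (n : ℕ) : dd (n+1) = dd n * ((n + 5/6) / (n + 3/2)) := Finset.prod_range_succ _ _

lemma S_fact (n : ℕ) : S n = (Nat.factorial (6*n) * Nat.factorial n : ℝ)
    / (2*(2*n+1) * (Nat.factorial (3*n)) * (Nat.factorial (2*n))^2) := by
  rcases Nat.eq_zero_or_pos n with h | h
  · subst h; simp [S, Nat.factorial]
  · rw [S, if_neg (by omega)]
    rw [Nat.cast_choose ℝ (by omega : 3*n ≤ 6*n), Nat.cast_choose ℝ (by omega : n ≤ 3*n),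
      Nat.cast_choose ℝ (by omega : n ≤ 2*n)]
    have e1 : 6*n - 3*n = 3*n := by omega
    have e2 : 3*n - n = 2*n := by omega
    have e3 : 2*n - n = n := by omega
    rw [e1, e2, e3]
    have f1 : (Nat.factorial (3*n) : ℝ) ≠ 0 := Nat.cast_ne_zero.2 (Nat.factorial_ne_zero _)
    have f2 : (Nat.factorial (2*n) : ℝ) ≠ 0 := Nat.cast_ne_zero.2 (Nat.factorial_ne_zero _)
    have f3 : (Nat.factorial n : ℝ) ≠ 0 := Nat.cast_ne_zero.2 (Nat.factorial_ne_zero _)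
    have f4 : (2*(n:ℝ)+1) ≠ 0 := by positivity
    field_simp

lemma key_t (n : ℕ) : S n / 108^n = (1/2) * (cc n * dd n) := by
  induction n with
  | zero => simp [S, cc, dd]
  | succ n ih =>
    have hstep : S (n+1) = 108 * S n * ((n + 1/6)*(n + 5/6)/((n+1)*(n + 3/2))) := by
      rw [S_fact, S_fact]
      have h6 : (Nat.factorial (6*(n+1)) : ℝ) =
          (6*n+6)*((6*n+5)*((6*n+4)*((6*n+3)*((6*n+2)*((6*n+1)*Nat.factorial (6*n)))))) := by
        have : 6*(n+1) = (6*n+5)+1 := by ring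
        rw [this, Nat.factorial_succ]
        have : 6*n+5 = (6*n+4)+1 := by ring
        rw [this, Nat.factorial_succ]
        have : 6*n+4 = (6*n+3)+1 := by ring
        rw [this, Nat.factorial_succ]
        have : 6*n+3 = (6*n+2)+1 := by ring
        rw [this, Nat.factorial_succ]
        have : 6*n+2 = (6*n+1)+1 := by ring
        rw [this, Nat.factorial_succ]
        have : 6*n+1 = (6*n)+1 := by ring
        rw [this, Nat.factorial_succ]
        push_cast; ring
      have h3 : (Nat.factorial (3*(n+1)) : ℝ) =
          (3*n+3)*((3*n+2)*((3*n+1)*Nat.factorial (3*n))) := by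
        have : 3*(n+1) = (3*n+2)+1 := by ring
        rw [this, Nat.factorial_succ]
        have : 3*n+2 = (3*n+1)+1 := by ring
        rw [this, Nat.factorial_succ]
        have : 3*n+1 = (3*n)+1 := by ring
        rw [this, Nat.factorial_succ]
        push_cast; ring
      have h2 : (Nat.factorial (2*(n+1)) : ℝ) = (2*n+2)*((2*n+1)*Nat.factorial (2*n)) := by
        have : 2*(n+1) = (2*n+1)+1 := by ring
        rw [this, Nat.factorial_succ]
        have : 2*n+1 = (2*n)+1 := by ring
        rw [this, Nat.factorial_succ]
        push_cast; ring
      have h1 : (Nat.factorial (n+1) : ℝ) = (n+1)*Nat.factorial n := by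
        rw [Nat.factorial_succ]; push_cast; ring
      rw [h6, h3, h2, h1]
      have f1 : (Nat.factorial (3*n) : ℝ) ≠ 0 := Nat.cast_ne_zero.2 (Nat.factorial_ne_zero _)
      have f2 : (Nat.factorial (2*n) : ℝ) ≠ 0 := Nat.cast_ne_zero.2 (Nat.factorial_ne_zero _)
      have f3 : (Nat.factorial n : ℝ) ≠ 0 := Nat.cast_ne_zero.2 (Nat.factorial_ne_zero _)
      have f4 : (2*(n:ℝ)+1) ≠ 0 := by positivity
      have f5 : ((n:ℝ)+1) ≠ 0 := by positivity
      have f6 : ((n:ℝ)+3/2) ≠ 0 := by positivity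
      have f7 : (2*((n:ℝ)+1)+1) ≠ 0 := by positivity
      push_cast
      field_simp
      ring
    rw [div_eq_iff (by positivity : ((108:ℝ)^n) ≠ 0)] at ih
    rw [hstep, cc_succ, dd_succ, ih]
    have f5 : ((n:ℝ)+1) ≠ 0 := by positivity
    have f6 : ((n:ℝ)+3/2) ≠ 0 := by positivity
    have f7 : ((108:ℝ)^n) ≠ 0 := by positivity
    field_simp
    ring




lemma cc_pos (n : ℕ) : 0 < cc n := Finset.prod_pos (fun k _ => by positivity)

lemma cc_le_one (n : ℕ) : cc n ≤ 1 := by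
  induction n with
  | zero => simp [cc]
  | succ n ih =>
    rw [cc_succ]
    have h1 : ((n:ℝ) + 1/6) / (n + 1) ≤ 1 := by
      rw [div_le_one (by positivity)]; linarith
    nlinarith [cc_pos n, (cc_pos n).le]

lemma cc_rec (n : ℕ) : cc (n+1) * (n+1) = cc n * (n + 1/6) := by
  rw [cc_succ]; field_simp

lemma summable_cx {x : ℝ} (hx : |x| < 1) : Summable (fun n => cc n * x^n) := by
  apply Summable.of_norm_bounded (summable_geometric_of_lt_one (abs_nonneg x) hx)
  intro n
  rw [norm_mul, norm_pow]
  calc ‖cc n‖ * ‖x‖^n ≤ 1 * ‖x‖^n := by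
        apply mul_le_mul_of_nonneg_right _ (by positivity)
        rw [Real.norm_eq_abs, abs_of_pos (cc_pos n)]; exact cc_le_one n
    _ = |x|^n := by rw [one_mul, Real.norm_eq_abs]

noncomputable def GG : ℝ → ℝ := fun x => ∑' n, cc n * x^n

lemma GG_zero : GG 0 = 1 := by
  rw [GG, tsum_eq_single 0 (by intro n hn; rcases Nat.exists_eq_succ_of_ne_zero hn with ⟨m, rfl⟩; simp)]
  simp [cc]

lemma summable_deriv_bound {ρ : ℝ} (hρ0 : 0 ≤ ρ) (hρ : ρ < 1) :
    Summable (fun n : ℕ => (n : ℝ) * ρ^(n-1)) := by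
  rw [← summable_nat_add_iff 1]
  apply Summable.of_norm_bounded (g := fun n : ℕ => ((n:ℝ)+1) * ρ^n)
  · have h1 : Summable (fun n : ℕ => (n:ℝ) * ρ^n) := by
      have := summable_pow_mul_geometric_of_norm_lt_one 1 (by rwa [Real.norm_eq_abs, abs_of_nonneg hρ0])
      simpa using this
    have h2 : Summable (fun n : ℕ => ρ^n) := summable_geometric_of_lt_one hρ0 hρ
    simpa [add_mul] using h1.add h2
  · intro n
    simp only [Nat.add_sub_cancel, norm_mul, norm_pow, Real.norm_eq_abs]
    push_cast
    rw [abs_of_nonneg (by positivity : (0:ℝ) ≤ (n:ℝ)+1), abs_of_nonneg hρ0]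

lemma GG_hasDerivAt {ρ x : ℝ} (hρ : ρ < 1) (hx : x ∈ Ioo (-ρ) ρ) :
    HasDerivAt GG (∑' n, cc n * (n * x^(n-1))) x := by
  have hρ0 : 0 < ρ := by
    rcases hx with ⟨h1, h2⟩; linarith
  apply hasDerivAt_tsum_of_isPreconnected (summable_deriv_bound hρ0.le hρ)
    isOpen_Ioo (convex_Ioo _ _).isPreconnected
    (g := fun n y => cc n * y^n) (g' := fun n y => cc n * (n * y^(n-1)))
    (y₀ := 0) ?_ ?_ ?_ ?_ hx
  · intro n y _
    exact (hasDerivAt_pow n y).const_mul (cc n)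
  · intro n y hy
    rw [Real.norm_eq_abs, abs_mul, abs_mul, abs_of_pos (cc_pos n), abs_of_nonneg (by positivity : (0:ℝ) ≤ (n:ℝ))]
    have hyρ : |y| ≤ ρ := by
      rw [abs_le]; exact ⟨hy.1.le, hy.2.le⟩
    calc cc n * ((n:ℝ) * |y^(n-1)|) ≤ 1 * ((n:ℝ) * ρ^(n-1)) := by
          apply mul_le_mul (cc_le_one n) _ (by positivity) zero_le_one
          apply mul_le_mul_of_nonneg_left _ (Nat.cast_nonneg n)
          rw [abs_pow]
          exact pow_le_pow_left₀ (abs_nonneg y) hyρ _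
      _ = (n:ℝ) * ρ^(n-1) := one_mul _
  · exact Set.mem_Ioo.mpr ⟨by linarith, hρ0⟩
  · exact (summable_cx (by simp : |(0:ℝ)| < 1))


lemma GG_ode {x : ℝ} (hx : |x| < 1) :
    (1 - x) * (∑' n, cc n * ((n:ℝ) * x^(n-1))) = (1/6) * GG x := by
  set D := ∑' n, cc n * ((n:ℝ) * x^(n-1)) with hD
  have hsum : Summable (fun n => cc n * ((n:ℝ) * x^(n-1))) := by
    apply Summable.of_norm_bounded (g := fun n : ℕ => (n:ℝ) * |x|^(n-1))
      (summable_deriv_bound (abs_nonneg x) hx)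
    intro n
    rw [Real.norm_eq_abs, abs_mul, abs_mul, abs_of_pos (cc_pos n),
      abs_of_nonneg (Nat.cast_nonneg n : (0:ℝ) ≤ n), abs_pow]
    calc cc n * ((n:ℝ) * |x|^(n-1)) ≤ 1 * ((n:ℝ) * |x|^(n-1)) :=
          mul_le_mul_of_nonneg_right (cc_le_one n) (by positivity)
      _ = _ := one_mul _
  have h0 : HasSum (fun n => cc n * ((n:ℝ) * x^(n-1))) D := hsum.hasSum
  have h1 : HasSum (fun n : ℕ => cc (n+1) * (((n:ℝ)+1) * x^n)) D := by
    have h0' : HasSum (fun n => cc n * ((n:ℝ) * x^(n-1))) (D + ∑ i ∈ Finset.range 1, cc i * ((i:ℝ) * x^(i-1))) := by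
      simpa using h0
    have := (hasSum_nat_add_iff (f := fun n => cc n * ((n:ℝ) * x^(n-1))) 1).mpr h0'
    convert this using 2 with n
    · rfl
    push_cast
    simp [Nat.add_sub_cancel]
  have h1' : HasSum (fun n : ℕ => cc n * ((n:ℝ) + 1/6) * x^n) D := by
    refine h1.congr_fun fun n => ?_
    have hrec := cc_rec n
    push_cast at hrec ⊢
    linear_combination (-(x ^ n)) * hrec
  have h2 : HasSum (fun n : ℕ => cc n * (n:ℝ) * x^n) (x * D) := by
    have := h0.mul_left x
    refine this.congr_fun fun n => ?_
    rcases n with _ | m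
    · simp
    · push_cast
      ring
  have h3 := h1'.sub h2
  have h4 : HasSum (fun n : ℕ => (1/6) * (cc n * x^n)) (D - x * D) := by
    refine h3.congr_fun fun n => ?_
    ring
  have h5 : HasSum (fun n : ℕ => (1/6) * (cc n * x^n)) ((1/6) * GG x) :=
    (summable_cx hx).hasSum.mul_left _
  have := h4.unique h5
  linear_combination this

lemma GG_const {x : ℝ} (h0 : 0 ≤ x) (h1 : x < 1) : (1-x)^((1:ℝ)/6) * GG x = 1 := by
  set ρ := (x+1)/2 with hρdef
  have hρ1 : ρ < 1 := by rw [hρdef]; linarith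
  have hxρ : x < ρ := by rw [hρdef]; linarith
  have hρ0 : 0 < ρ := by rw [hρdef]; linarith
  set h : ℝ → ℝ := fun y => (1-y)^((1:ℝ)/6) * GG y with hh
  have key : ∀ y ∈ Set.Ico (0:ℝ) x ∪ {x}, True := fun _ _ => trivial
  have hderiv : ∀ y ∈ Set.Ioo (-ρ) ρ, HasDerivAt h 0 y := by
    intro y hy
    have hy1 : 1 - y > 0 := by
      rcases hy with ⟨_, hy2⟩; linarith
    have hG := GG_hasDerivAt hρ1 hy
    have hyabs : |y| < 1 := by
      rw [abs_lt]; rcases hy with ⟨a, b⟩; constructor <;> linarith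
    have hrp : HasDerivAt (fun y : ℝ => (1-y)^((1:ℝ)/6))
        (-( (1:ℝ)/6 * (1-y)^((1:ℝ)/6 - 1))) y := by
      have hbase : HasDerivAt (fun y : ℝ => 1 - y) (-1) y := by
        simpa using (hasDerivAt_id y).const_sub 1
      have := (Real.hasDerivAt_rpow_const (x := 1-y) (p := (1:ℝ)/6) (Or.inl hy1.ne')).comp y hbase
      refine this.congr_deriv ?_
      ring
    have hprod := hrp.mul hG
    refine hprod.congr_deriv ?_
    have hode := GG_ode hyabs
    have e1 : (1-y)^((1:ℝ)/6) = (1-y)^((1:ℝ)/6 - 1) * (1-y) := by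
      rw [← Real.rpow_add_one hy1.ne']
      ring_nf
    rw [e1]
    linear_combination ((1-y)^((1:ℝ)/6 - 1)) * hode
  have hcont : ContinuousOn h (Set.Icc 0 x) := by
    intro y hy
    have hmem : y ∈ Set.Ioo (-ρ) ρ := ⟨by linarith [hy.1], by linarith [hy.2]⟩
    exact ((hderiv y hmem).continuousAt).continuousWithinAt
  have := constant_of_has_deriv_right_zero hcont (fun y hy => by
    have hmem : y ∈ Set.Ioo (-ρ) ρ := ⟨by linarith [hy.1], by linarith [hy.2.le]⟩
    exact ((hderiv y hmem).hasDerivWithinAt))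
  have hx := this x (Set.right_mem_Icc.mpr h0)
  have hx2 : (1-x)^((1:ℝ)/6) * GG x = (1-(0:ℝ))^((1:ℝ)/6) * GG 0 := hx
  rw [GG_zero] at hx2
  simpa using hx2

lemma binomial_series {x : ℝ} (h0 : 0 ≤ x) (h1 : x < 1) :
    HasSum (fun n => cc n * x^n) ((1-x)^(-(1:ℝ)/6)) := by
  have hx1 : (0:ℝ) < 1 - x := by linarith
  have habs : |x| < 1 := by rw [abs_of_nonneg h0]; exact h1
  have hG := (summable_cx habs).hasSum
  have hconst := GG_const h0 h1
  have hne : (1-x)^((1:ℝ)/6) ≠ 0 := by positivity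
  have : GG x = (1-x)^(-(1:ℝ)/6) := by
    have : GG x = ((1-x)^((1:ℝ)/6))⁻¹ := by
      field_simp at hconst ⊢
      linarith
    rw [this, ← Real.rpow_neg hx1.le]
    norm_num
  have hGx : (∑' n, cc n * x^n) = (1-x)^(-(1:ℝ)/6) := this
  rwa [hGx] at hG



noncomputable def Beta (x y : ℝ) : ℝ := Real.Gamma x * Real.Gamma y / Real.Gamma (x + y)

lemma beta_pos {x y : ℝ} (hx : 0 < x) (hy : 0 < y) : 0 < Beta x y := by
  unfold Beta
  have := Real.Gamma_pos_of_pos hx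
  have := Real.Gamma_pos_of_pos hy
  have := Real.Gamma_pos_of_pos (by linarith : 0 < x + y)
  positivity

-- complex integrand agrees with real one on Ioc 0 1
lemma integrand_eq {x y : ℝ} (t : ℝ) (ht : t ∈ Set.Ioc (0:ℝ) 1) :
    ((t ^ (x-1) * (1-t) ^ (y-1) : ℝ) : ℂ)
      = (t:ℂ) ^ ((x:ℂ)-1) * (1-(t:ℂ)) ^ ((y:ℂ)-1) := by
  rw [Complex.ofReal_mul, Complex.ofReal_cpow ht.1.le, Complex.ofReal_cpow (by linarith [ht.2] : (0:ℝ) ≤ 1 - t)]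
  push_cast
  ring

lemma beta_integrable {x y : ℝ} (hx : 0 < x) (hy : 0 < y) :
    IntegrableOn (fun t : ℝ => t ^ (x-1) * (1-t) ^ (y-1)) (Set.Ioo 0 1) := by
  have hc : IntervalIntegrable (fun t : ℝ => (t:ℂ) ^ ((x:ℂ)-1) * (1-(t:ℂ)) ^ ((y:ℂ)-1))
      MeasureTheory.volume 0 1 := Complex.betaIntegral_convergent (by simpa using hx) (by simpa using hy)
  have hIoc : IntegrableOn (fun t : ℝ => (t:ℂ) ^ ((x:ℂ)-1) * (1-(t:ℂ)) ^ ((y:ℂ)-1)) (Set.Ioc 0 1) :=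
    (intervalIntegrable_iff_integrableOn_Ioc_of_le zero_le_one).mp hc
  have hre : IntegrableOn (fun t : ℝ => ((t:ℂ) ^ ((x:ℂ)-1) * (1-(t:ℂ)) ^ ((y:ℂ)-1)).re) (Set.Ioc 0 1) :=
    hIoc.re
  have hre2 : IntegrableOn (fun t : ℝ => ((t:ℂ) ^ ((x:ℂ)-1) * (1-(t:ℂ)) ^ ((y:ℂ)-1)).re) (Set.Ioo 0 1) :=
    hre.mono_set Set.Ioo_subset_Ioc_self
  refine hre2.congr_fun (fun t ht => ?_) measurableSet_Ioo
  beta_reduce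
  rw [← integrand_eq t ⟨ht.1, ht.2.le⟩, Complex.ofReal_re]

lemma beta_integral {x y : ℝ} (hx : 0 < x) (hy : 0 < y) :
    ∫ t in Set.Ioo (0:ℝ) 1, t ^ (x-1) * (1-t) ^ (y-1) = Beta x y := by
  have h1 : ∫ t in Set.Ioo (0:ℝ) 1, t ^ (x-1) * (1-t) ^ (y-1)
      = ∫ t in (0:ℝ)..1, t ^ (x-1) * (1-t) ^ (y-1) := by
    rw [intervalIntegral.integral_of_le zero_le_one, MeasureTheory.integral_Ioc_eq_integral_Ioo]
  rw [h1]
  have h2 : ((∫ t in (0:ℝ)..1, t ^ (x-1) * (1-t) ^ (y-1) : ℝ) : ℂ)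
      = Complex.betaIntegral x y := by
    rw [← intervalIntegral.integral_ofReal]
    unfold Complex.betaIntegral
    refine intervalIntegral.integral_congr (fun t ht => ?_)
    rw [Set.uIcc_of_le zero_le_one] at ht
    rw [Complex.ofReal_mul, Complex.ofReal_cpow ht.1, Complex.ofReal_cpow (by linarith [ht.2] : (0:ℝ) ≤ 1 - t)]
    push_cast
    ring
  have h3 := Complex.Gamma_mul_Gamma_eq_betaIntegral
    (by simpa using hx : 0 < Complex.re (x:ℂ)) (by simpa using hy : 0 < Complex.re (y:ℂ))
  have hne : Complex.Gamma ((x:ℂ) + y) ≠ 0 := by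
    apply Complex.Gamma_ne_zero_of_re_pos
    simpa using (by linarith : (0:ℝ) < x + y)
  have h4 : Complex.betaIntegral x y
      = Complex.Gamma x * Complex.Gamma y / Complex.Gamma ((x:ℂ) + y) := by
    field_simp
    linear_combination -h3
  apply Complex.ofReal_injective
  rw [h2, h4]
  unfold Beta
  push_cast [← Complex.Gamma_ofReal]
  norm_num

lemma beta_rec {x y : ℝ} (hx : 0 < x) (hy : 0 < y) :
    Beta (x+1) y = Beta x y * (x / (x+y)) := by
  unfold Beta
  rw [Real.Gamma_add_one hx.ne']
  have : x + 1 + y = (x + y) + 1 := by ring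
  rw [this, Real.Gamma_add_one (by positivity : (x+y) ≠ 0)]
  have g1 : Real.Gamma (x+y) ≠ 0 := (Real.Gamma_pos_of_pos (by linarith)).ne'
  have g2 : (x + y) ≠ 0 := by positivity
  field_simp



noncomputable def qq : ℕ → ℝ := fun n => ∏ k ∈ Finset.range n, ((k + 1/2) / (k + 1))
noncomputable def rr : ℕ → ℝ := fun n => ∏ k ∈ Finset.range n, ((k + 1/2) / (k + 3/2))

lemma dd_pos (n : ℕ) : 0 < dd n := Finset.prod_pos (fun k _ => by positivity)

lemma rr_eq (n : ℕ) : rr n = 1 / (2*n+1) := by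
  induction n with
  | zero => simp [rr]
  | succ n ih =>
    rw [rr, Finset.prod_range_succ, ← rr, ih]
    push_cast
    have h1 : (2*(n:ℝ)+1) ≠ 0 := by positivity
    have h2 : ((n:ℝ)+3/2) ≠ 0 := by positivity
    field_simp
    ring

lemma qq_le (n : ℕ) : qq n ≤ 1 / Real.sqrt (n+1) := by
  induction n with
  | zero => simp [qq]
  | succ n ih =>
    rw [qq, Finset.prod_range_succ, ← qq]
    push_cast
    set a := Real.sqrt ((n:ℝ)+1) with ha
    set b := Real.sqrt ((n:ℝ)+1+1) with hb
    have hapos : 0 < a := Real.sqrt_pos.mpr (by positivity)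
    have hbpos : 0 < b := Real.sqrt_pos.mpr (by positivity)
    have ha2 : a^2 = (n:ℝ)+1 := Real.sq_sqrt (by positivity)
    have hb2 : b^2 = (n:ℝ)+2 := by
      rw [hb]; rw [Real.sq_sqrt (by positivity)]; ring
    have key : b * ((n:ℝ)+1/2) ≤ a * ((n:ℝ)+1) := by
      have hsq : (b * ((n:ℝ)+1/2))^2 ≤ (a * ((n:ℝ)+1))^2 := by
        rw [mul_pow, mul_pow, ha2, hb2]
        nlinarith [Nat.cast_nonneg (α := ℝ) n]
      exact (pow_le_pow_iff_left₀ (by positivity) (by positivity) two_ne_zero).mp hsq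
    have step : (1/a) * (((n:ℝ)+1/2)/((n:ℝ)+1)) ≤ 1/b := by
      rw [div_mul_div_comm, one_mul, div_le_div_iff₀ (by positivity) hbpos]
      nlinarith [key]
    calc qq n * (((n:ℝ)+1/2)/((n:ℝ)+1)) ≤ (1/a) * (((n:ℝ)+1/2)/((n:ℝ)+1)) := by
          apply mul_le_mul_of_nonneg_right _ (by positivity)
          simpa [ha] using ih
      _ ≤ 1/b := step
      _ = 1 / Real.sqrt ((n:ℝ)+1+1) := by rw [hb]

lemma ccdd_le (n : ℕ) : cc n * dd n ≤ ((n:ℝ)+1) ^ (-(3/2) : ℝ) := by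
  have h1 : cc n * dd n ≤ qq n * rr n := by
    rw [cc, dd, qq, rr, ← Finset.prod_mul_distrib, ← Finset.prod_mul_distrib]
    apply Finset.prod_le_prod
    · intro k _; positivity
    · intro k _
      rw [div_mul_div_comm, div_mul_div_comm,
        div_le_div_iff₀ (by positivity) (by positivity)]
      nlinarith [Nat.cast_nonneg (α := ℝ) k]
  have h2 : qq n * rr n ≤ ((n:ℝ)+1) ^ (-(3/2) : ℝ) := by
    have hr : rr n = 1/(2*(n:ℝ)+1) := by rw [rr_eq]
    have hq := qq_le n
    have hrle : (1:ℝ)/(2*(n:ℝ)+1) ≤ 1/((n:ℝ)+1) := by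
      apply one_div_le_one_div_of_le (by positivity)
      linarith [Nat.cast_nonneg (α := ℝ) n]
    have hqq_nonneg : 0 ≤ qq n := Finset.prod_nonneg (fun k _ => by positivity)
    have hrr_nonneg : 0 ≤ rr n := Finset.prod_nonneg (fun k _ => by positivity)
    calc qq n * rr n ≤ (1/Real.sqrt ((n:ℝ)+1)) * (1/((n:ℝ)+1)) := by
          apply mul_le_mul hq _ hrr_nonneg (by positivity)
          rw [hr]; exact hrle
      _ = ((n:ℝ)+1) ^ (-(3/2) : ℝ) := by
          rw [show (-(3/2) : ℝ) = -1 + -(1/2) by norm_num,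
            Real.rpow_add (by positivity : (0:ℝ) < (n:ℝ)+1)]
          rw [Real.rpow_neg_one, Real.rpow_neg (by positivity), ← Real.sqrt_eq_rpow]
          ring
  exact h1.trans h2

lemma beta_shift (n : ℕ) : Beta ((n:ℝ) + 5/6) (2/3) = dd n * Beta (5/6) (2/3) := by
  induction n with
  | zero => simp [dd]
  | succ n ih =>
    have h : ((n+1:ℕ):ℝ) + 5/6 = ((n:ℝ) + 5/6) + 1 := by push_cast; ring
    rw [h, beta_rec (by positivity) (by norm_num), ih, dd_succ]
    have h2 : (n:ℝ) + 5/6 + 2/3 = (n:ℝ) + 3/2 := by ring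
    rw [h2]
    ring

lemma summable_ccdd : Summable (fun n => cc n * dd n) := by
  have h : Summable (fun n : ℕ => ((n:ℝ)+1) ^ (-(3/2):ℝ)) := by
    have h1 := (Real.summable_nat_rpow (p := -(3/2))).mpr (by norm_num)
    have h2 := (summable_nat_add_iff 1).mpr h1
    apply h2.congr
    intro n
    push_cast
    norm_num
  exact Summable.of_nonneg_of_le (fun n => mul_nonneg (cc_pos n).le (dd_pos n).le) ccdd_le h

lemma final_value : Beta (5/6) (1/2) * (1/(2 * Beta (5/6) (2/3))) = 3 * Real.sqrt 3 / 8 := by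
  unfold Beta
  have h12 : Real.Gamma (1/2) = Real.sqrt π := Real.Gamma_one_half_eq
  have h43 : Real.Gamma ((5:ℝ)/6 + 1/2) = (1/3) * Real.Gamma (1/3) := by
    rw [show (5:ℝ)/6 + 1/2 = 1/3 + 1 by norm_num, Real.Gamma_add_one (by norm_num)]
  have h32 : Real.Gamma ((5:ℝ)/6 + 2/3) = (1/2) * Real.Gamma (1/2) := by
    rw [show (5:ℝ)/6 + 2/3 = 1/2 + 1 by norm_num, Real.Gamma_add_one (by norm_num)]
  have hrefl : Real.Gamma (1/3) * Real.Gamma (2/3) = π / Real.sin (π * (1/3)) := by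
    have h := Real.Gamma_mul_Gamma_one_sub (1/3)
    rw [show (1:ℝ) - 1/3 = 2/3 by norm_num] at h
    exact h
  have hsin : Real.sin (π * (1/3)) = Real.sqrt 3 / 2 := by
    rw [show π * (1/3) = π/3 by ring, Real.sin_pi_div_three]
  have hs3 : (0:ℝ) < Real.sqrt 3 := Real.sqrt_pos.mpr (by norm_num)
  have hs3sq : Real.sqrt 3 * Real.sqrt 3 = 3 := Real.mul_self_sqrt (by norm_num)
  have hprod : Real.Gamma (1/3) * Real.Gamma (2/3) * Real.sqrt 3 = 2*π := by
    rw [hrefl, hsin]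
    field_simp
  have hpisq : Real.sqrt π * Real.sqrt π = π := Real.mul_self_sqrt Real.pi_pos.le
  have hg56 : 0 < Real.Gamma (5/6) := Real.Gamma_pos_of_pos (by norm_num)
  have hg13 : 0 < Real.Gamma (1/3) := Real.Gamma_pos_of_pos (by norm_num)
  have hg23 : 0 < Real.Gamma (2/3) := Real.Gamma_pos_of_pos (by norm_num)
  have hπ : 0 < π := Real.pi_pos
  rw [h43, h32, h12]
  have hsp : (0:ℝ) < Real.sqrt π := Real.sqrt_pos.mpr hπ
  field_simp
  linear_combination 8*hpisq - 4*hprod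

theorem S_sum_at_108 :
    HasSum (fun n : ℕ => S n / 108 ^ n) (3 * Real.sqrt 3 / 8) := by
  set B0 := Beta (5/6) (2/3) with hB0
  have hB0pos : 0 < B0 := beta_pos (by norm_num) (by norm_num)
  set μ := MeasureTheory.volume.restrict (Set.Ioo (0:ℝ) 1) with hμ
  set F : ℕ → ℝ → ℝ :=
    fun n t => cc n * (t ^ (((n:ℝ) + 5/6) - 1) * (1-t) ^ ((2/3:ℝ) - 1)) with hF
  have hFint : ∀ n, Integrable (F n) μ := fun n =>
    ((beta_integrable (by positivity) (by norm_num)).const_mul (cc n))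
  have hFval : ∀ n, ∫ t, F n t ∂μ = cc n * dd n * B0 := by
    intro n
    rw [hμ]
    show ∫ t in Set.Ioo (0:ℝ) 1, cc n * (t ^ (((n:ℝ) + 5/6) - 1) * (1-t) ^ ((2/3:ℝ) - 1))
      = cc n * dd n * B0
    rw [MeasureTheory.integral_const_mul, beta_integral (by positivity) (by norm_num),
      beta_shift, hB0]
    ring
  have hFnorm : ∀ n, ∫ t, ‖F n t‖ ∂μ = cc n * dd n * B0 := by
    intro n
    rw [← hFval n]
    apply MeasureTheory.integral_congr_ae
    rw [hμ]
    refine (MeasureTheory.ae_restrict_iff' measurableSet_Ioo).2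
      (Filter.Eventually.of_forall fun t ht => ?_)
    have h1 : (0:ℝ) < t := ht.1
    have h3 : (0:ℝ) < 1 - t := by linarith [ht.2]
    apply Real.norm_of_nonneg
    show 0 ≤ cc n * (t ^ (((n:ℝ) + 5/6) - 1) * (1-t) ^ ((2/3:ℝ) - 1))
    exact mul_nonneg (cc_pos n).le
      (mul_nonneg (Real.rpow_nonneg h1.le _) (Real.rpow_nonneg h3.le _))
  have hsumm : Summable fun n => ∫ t, ‖F n t‖ ∂μ := by
    apply Summable.congr ((summable_ccdd.mul_right B0))
    intro n
    rw [hFnorm n]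
  have key := MeasureTheory.hasSum_integral_of_summable_integral_norm hFint hsumm
  have htsum : ∫ t, (∑' n, F n t) ∂μ = Beta (5/6) (1/2) := by
    have hpt : ∀ t ∈ Set.Ioo (0:ℝ) 1,
        (∑' n, F n t) = t ^ ((5/6:ℝ)-1) * (1-t) ^ ((1/2:ℝ)-1) := by
      intro t ht
      obtain ⟨h0, h1⟩ := ht
      have hterm : ∀ n : ℕ, F n t
          = (cc n * t^n) * (t ^ ((5/6:ℝ)-1) * (1-t) ^ ((2/3:ℝ)-1)) := by
        intro n
        rw [hF]
        show cc n * (t ^ (((n:ℝ) + 5/6) - 1) * (1-t) ^ ((2/3:ℝ) - 1)) = _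
        rw [show ((n:ℝ) + 5/6) - 1 = (n:ℝ) + ((5/6:ℝ)-1) by ring,
          Real.rpow_add h0, Real.rpow_natCast]
        ring
      calc (∑' n, F n t)
          = ∑' n, (cc n * t^n) * (t ^ ((5/6:ℝ)-1) * (1-t) ^ ((2/3:ℝ)-1)) := tsum_congr hterm
        _ = (∑' n, cc n * t^n) * (t ^ ((5/6:ℝ)-1) * (1-t) ^ ((2/3:ℝ)-1)) := tsum_mul_right
        _ = (1-t)^(-(1:ℝ)/6) * (t ^ ((5/6:ℝ)-1) * (1-t) ^ ((2/3:ℝ)-1)) := by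
            rw [(binomial_series h0.le h1).tsum_eq]
        _ = t ^ ((5/6:ℝ)-1) * (1-t) ^ ((1/2:ℝ)-1) := by
            rw [show ((1/2:ℝ)-1) = (-(1:ℝ)/6) + ((2/3:ℝ)-1) by norm_num,
              Real.rpow_add (by linarith : (0:ℝ) < 1-t)]
            ring
    have heq : ∫ t, (∑' n, F n t) ∂μ
        = ∫ t in Set.Ioo (0:ℝ) 1, t ^ ((5/6:ℝ)-1) * (1-t) ^ ((1/2:ℝ)-1) := by
      rw [hμ]
      apply MeasureTheory.integral_congr_ae
      exact (MeasureTheory.ae_restrict_iff' measurableSet_Ioo).2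
        (Filter.Eventually.of_forall hpt)
    rw [heq, beta_integral (by norm_num) (by norm_num)]
  rw [htsum] at key
  rw [show (fun n => ∫ t, F n t ∂μ) = fun n => cc n * dd n * B0 from funext hFval] at key
  have key3 := key.mul_right (1/(2*B0))
  have hfun : (fun n => cc n * dd n * B0 * (1/(2*B0))) = (fun n : ℕ => S n / 108^n) := by
    funext n
    rw [key_t n]
    field_simp
  rw [hfun] at key3
  rw [show (3 * Real.sqrt 3 / 8 : ℝ) = Beta (5/6) (1/2) * (1/(2*B0)) from (final_value).symm]
  exact key3
end

section
/- The series ∑_{n≥0} S_n / ((2n+3)·108^n) converges to 27√3/256, where S_0 = 1/2 and S_n = C(6n,3n)·C(3n,n)/(2(2n+1)·C(2n,n)) for n ≥ 1. -/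
open Real Set MeasureTheory

noncomputable def aa (n : ℕ) : ℝ := S n / 108 ^ n

lemma S_eq (n : ℕ) : S n =
    (Nat.factorial (6*n) * Nat.factorial n : ℝ) /
      (2 * (2*n+1) * Nat.factorial (3*n) * (Nat.factorial (2*n))^2) := by
  rcases Nat.eq_zero_or_pos n with h | h
  · subst h; simp [S, Nat.factorial]
  · have h1 : 3*n ≤ 6*n := by omega
    have h2 : n ≤ 3*n := by omega
    have h3 : n ≤ 2*n := by omega
    rw [S, if_neg (by omega), Nat.cast_choose ℝ h1, Nat.cast_choose ℝ h2,
      Nat.cast_choose ℝ h3, show 6*n - 3*n = 3*n by omega, show 3*n - n = 2*n by omega,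
      show 2*n - n = n by omega]
    have f6 : (0:ℝ) < Nat.factorial (6*n) := by positivity
    have f3 : (0:ℝ) < Nat.factorial (3*n) := by positivity
    have f2 : (0:ℝ) < Nat.factorial (2*n) := by positivity
    have f1 : (0:ℝ) < Nat.factorial n := by positivity
    have h21 : (0:ℝ) < 2*(n:ℝ)+1 := by positivity
    field_simp

lemma fact_cast_succ (m : ℕ) : (Nat.factorial (m+1) : ℝ) = (m+1) * Nat.factorial m := by
  rw [Nat.factorial_succ]; push_cast; ring

lemma aa_zero : aa 0 = 1/2 := by simp [aa, S]

lemma aa_nonneg (n : ℕ) : 0 ≤ aa n := by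
  rw [aa, S_eq]; positivity

lemma aa_succ (n : ℕ) : aa (n+1) =
    aa n * ((6*n+1)*(6*n+5)) / (18*(n+1)*(2*n+3)) := by
  have e6 : (Nat.factorial (6*(n+1)) : ℝ)
      = (6*n+6)*((6*n+5)*((6*n+4)*((6*n+3)*((6*n+2)*((6*n+1)*Nat.factorial (6*n)))))) := by
    rw [show 6*(n+1) = (6*n+5)+1 by ring, fact_cast_succ,
      show 6*n+5 = (6*n+4)+1 by ring, fact_cast_succ,
      show 6*n+4 = (6*n+3)+1 by ring, fact_cast_succ,
      show 6*n+3 = (6*n+2)+1 by ring, fact_cast_succ,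
      show 6*n+2 = (6*n+1)+1 by ring, fact_cast_succ,
      show 6*n+1 = (6*n)+1 by ring, fact_cast_succ]
    push_cast; ring
  have e3 : (Nat.factorial (3*(n+1)) : ℝ)
      = (3*n+3)*((3*n+2)*((3*n+1)*Nat.factorial (3*n))) := by
    rw [show 3*(n+1) = (3*n+2)+1 by ring, fact_cast_succ,
      show 3*n+2 = (3*n+1)+1 by ring, fact_cast_succ,
      show 3*n+1 = (3*n)+1 by ring, fact_cast_succ]
    push_cast; ring
  have e2 : (Nat.factorial (2*(n+1)) : ℝ)
      = (2*n+2)*((2*n+1)*Nat.factorial (2*n)) := by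
    rw [show 2*(n+1) = (2*n+1)+1 by ring, fact_cast_succ,
      show 2*n+1 = (2*n)+1 by ring, fact_cast_succ]
    push_cast; ring
  have e1 : (Nat.factorial (n+1) : ℝ) = (n+1)*Nat.factorial n := fact_cast_succ n
  rw [aa, aa, S_eq, S_eq, e6, e3, e2, e1]
  have f6 : (0:ℝ) < Nat.factorial (6*n) := by positivity
  have f3 : (0:ℝ) < Nat.factorial (3*n) := by positivity
  have f2 : (0:ℝ) < Nat.factorial (2*n) := by positivity
  have f1 : (0:ℝ) < Nat.factorial n := by positivity
  have p108 : (0:ℝ) < (108:ℝ)^n := by positivity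
  push_cast
  field_simp
  ring

lemma aa_le (n : ℕ) : aa n ≤ 1/(2*(2*n+1)) := by
  induction n with
  | zero => simp [aa_zero]
  | succ n ih =>
    rw [aa_succ]
    have h0 := aa_nonneg n
    rw [div_le_iff₀ (by positivity)]
    push_cast
    have key : aa n * ((6*(n:ℝ)+1)*(6*n+5)) ≤ (1/(2*(2*(n:ℝ)+1))) * ((6*n+1)*(6*n+5)) := by
      apply mul_le_mul_of_nonneg_right ih (by positivity)
    calc aa n * ((6*(n:ℝ)+1)*(6*n+5)) ≤ (1/(2*(2*(n:ℝ)+1))) * ((6*n+1)*(6*n+5)) := key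
      _ ≤ 1 / (2 * (2 * ((n:ℝ) + 1) + 1)) * (18 * ((n:ℝ) + 1) * (2 * n + 3)) := by
          rw [div_mul_eq_mul_div, div_mul_eq_mul_div, div_le_div_iff₀ (by positivity) (by positivity)]
          nlinarith [sq_nonneg (n:ℝ)]

lemma aa_le_half (n : ℕ) : aa n ≤ 1/2 := by
  have := aa_le n
  have h : (1:ℝ)/(2*(2*n+1)) ≤ 1/2 := by
    apply div_le_div_of_nonneg_left (by norm_num) (by norm_num)
    nlinarith [Nat.cast_nonneg (α := ℝ) n]
  linarith

-- master summability lemma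
lemma abs_aa (n : ℕ) : |aa n| ≤ 1/2 := by
  rw [abs_of_nonneg (aa_nonneg n)]; exact aa_le_half n

lemma summable_aux {r : ℝ} (hr0 : 0 ≤ r) (hr1 : r < 1) (k : ℕ) :
    Summable (fun n : ℕ => ((n:ℝ)+3)^k * r^n) := by
  rcases eq_or_lt_of_le hr0 with h | h
  · apply summable_of_ne_finset_zero (s := {0})
    intro n hn
    simp only [Finset.mem_singleton] at hn
    rw [← h, zero_pow hn, mul_zero]
  · have hb : Summable (fun n : ℕ => (n:ℝ)^k * r^n) :=
      summable_pow_mul_geometric_of_norm_lt_one k (by rwa [Real.norm_eq_abs, abs_of_pos h])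
    have h3 : Summable (fun n : ℕ => ((n+3:ℕ):ℝ)^k * r^(n+3)) := (summable_nat_add_iff 3).2 hb
    have := h3.mul_left (r^3)⁻¹
    apply this.congr
    intro n
    push_cast
    rw [pow_add]
    field_simp

noncomputable def PP (x : ℝ) : ℝ := ∑' n : ℕ, aa n * x^(2*n+1)
noncomputable def QQ (x : ℝ) : ℝ := ∑' n : ℕ, aa n * ((2*(n:ℝ)+1) * x^(2*n))
noncomputable def WW (x : ℝ) : ℝ := ∑' n : ℕ, (aa n * (2*(n:ℝ)+1)) * ((2*(n:ℝ)) * x^(2*n-1))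

-- uniform bounds summability
lemma sum_u1 {r : ℝ} (hr0 : 0 ≤ r) (hr1 : r < 1) :
    Summable (fun n : ℕ => (2*(n:ℝ)+1) * (1/2) * r^(2*n)) := by
  have h := summable_aux (r := r^2) (by positivity) (by nlinarith [abs_nonneg r, sq_abs r, abs_lt.1 (show |r| < 1 by rw [abs_of_nonneg hr0]; exact hr1)]) 1
  apply h.of_nonneg_of_le (fun n => by positivity)
  intro n
  rw [pow_mul]
  apply mul_le_mul_of_nonneg_right _ (by positivity)
  push_cast; nlinarith [Nat.cast_nonneg (α := ℝ) n]

lemma sum_u2 {r : ℝ} (hr0 : 0 < r) (hr1 : r < 1) :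
    Summable (fun n : ℕ => ((2*(n:ℝ)+1) * (1/2)) * ((2*(n:ℝ)) * r^(2*n-1))) := by
  have h := (summable_aux (r := r^2) (by positivity)
      (by nlinarith) 2).mul_left (2/r)
  apply h.of_nonneg_of_le (fun n => by positivity)
  intro n
  rcases Nat.eq_zero_or_pos n with h0 | h0
  · subst h0; simp; positivity
  · have : r^(2*n-1) = r^(2*n) / r := by
      rw [eq_div_iff (ne_of_gt hr0), ← pow_succ, show 2*n-1+1 = 2*n by omega]
    rw [this, pow_mul]
    have hrn : (r^2)^n ≤ 1 := pow_le_one₀ (by positivity) (by nlinarith)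
    have h1 : (2*(n:ℝ)+1) * (1/2) * (2*(n:ℝ) * ((r^2)^n / r)) = (1/r) * ((2*(n:ℝ)+1)*(n:ℝ)) * (r^2)^n := by
      field_simp
    rw [h1]
    have h2 : (2*(n:ℝ)+1)*(n:ℝ) ≤ 2*((n:ℝ)+3)^2 := by nlinarith [Nat.cast_nonneg (α := ℝ) n]
    have h3 : (0:ℝ) ≤ (r^2)^n := by positivity
    have h4 : (0:ℝ) < 1/r := by positivity
    calc (1/r) * ((2*(n:ℝ)+1)*(n:ℝ)) * (r^2)^n
        ≤ (1/r) * (2*((n:ℝ)+3)^2) * (r^2)^n := by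
          apply mul_le_mul_of_nonneg_right _ h3
          exact mul_le_mul_of_nonneg_left h2 (le_of_lt h4)
      _ = 2/r * (((n:ℝ)+3)^2 * (r^2)^n) := by field_simp

lemma sumP {x : ℝ} (hx : |x| < 1) : Summable (fun n : ℕ => aa n * x^(2*n+1)) := by
  have h := (summable_aux (r := x^2) (sq_nonneg x) (by nlinarith [abs_nonneg x, sq_abs x]) 0).mul_left |x|
  apply Summable.of_norm
  apply h.of_nonneg_of_le (fun n => norm_nonneg _)
  intro n
  rw [norm_mul, norm_pow, pow_succ, pow_mul, Real.norm_eq_abs, Real.norm_eq_abs, sq_abs]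
  simp only [pow_zero, mul_one]
  calc |aa n| * ((x^2)^n * |x|) ≤ 1 * ((x^2)^n * |x|) := by
        apply mul_le_mul_of_nonneg_right (le_trans (abs_aa n) (by norm_num)) (by positivity)
    _ = |x| * (((n:ℝ)+3)^0 * (x^2)^n) := by ring

lemma hasDerivP {x : ℝ} (hx : |x| < 1) : HasDerivAt (PP) (QQ x) x := by
  set r : ℝ := (1+|x|)/2 with hr
  have hr0 : 0 < r := by positivity
  have hr1 : r < 1 := by rw [hr]; linarith
  have hxr : |x| < r := by rw [hr]; linarith [abs_nonneg x]
  have ht : IsOpen (Set.Ioo (-r) r) := isOpen_Ioo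
  have hcv : IsPreconnected (Set.Ioo (-r) r) := (convex_Ioo _ _).isPreconnected
  have hmem : x ∈ Set.Ioo (-r) r := by constructor <;> [linarith [neg_abs_le x]; linarith [le_abs_self x]]
  have h0 : (0:ℝ) ∈ Set.Ioo (-r) r := by constructor <;> simp [hr0] <;> linarith
  have hder : ∀ n : ℕ, ∀ y ∈ Set.Ioo (-r) r,
      HasDerivAt (fun y : ℝ => aa n * y^(2*n+1)) (aa n * ((2*(n:ℝ)+1) * y^(2*n))) y := by
    intro n y _
    have := (hasDerivAt_pow (2*n+1) y).const_mul (aa n)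
    simpa using this
  have hbd : ∀ n : ℕ, ∀ y ∈ Set.Ioo (-r) r,
      ‖aa n * ((2*(n:ℝ)+1) * y^(2*n))‖ ≤ (2*(n:ℝ)+1) * (1/2) * r^(2*n) := by
    intro n y hy
    have hyr : |y| ≤ r := by
      rw [abs_le]; exact ⟨le_of_lt hy.1, le_of_lt hy.2⟩
    rw [norm_mul, norm_mul, norm_pow, Real.norm_eq_abs, Real.norm_eq_abs, Real.norm_eq_abs]
    rw [abs_of_nonneg (by positivity : (0:ℝ) ≤ 2*(n:ℝ)+1)]
    calc |aa n| * ((2*(n:ℝ)+1) * |y|^(2*n)) ≤ (1/2) * ((2*(n:ℝ)+1) * r^(2*n)) := by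
          apply mul_le_mul (abs_aa n) _ (by positivity) (by norm_num)
          exact mul_le_mul_of_nonneg_left (pow_le_pow_left₀ (abs_nonneg y) hyr _) (by positivity)
      _ = (2*(n:ℝ)+1) * (1/2) * r^(2*n) := by ring
  have hsum0 : Summable (fun n : ℕ => aa n * (0:ℝ)^(2*n+1)) := by
    apply summable_of_ne_finset_zero (s := ∅)
    intro n _
    simp
  exact hasDerivAt_tsum_of_isPreconnected (sum_u1 (le_of_lt hr0) hr1) ht hcv hder hbd h0 hsum0 hmem

lemma hasDerivQ {x : ℝ} (hx : |x| < 1) : HasDerivAt (QQ) (WW x) x := by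
  set r : ℝ := (1+|x|)/2 with hr
  have hr0 : 0 < r := by positivity
  have hr1 : r < 1 := by rw [hr]; linarith
  have hxr : |x| < r := by rw [hr]; linarith [abs_nonneg x]
  have ht : IsOpen (Set.Ioo (-r) r) := isOpen_Ioo
  have hcv : IsPreconnected (Set.Ioo (-r) r) := (convex_Ioo _ _).isPreconnected
  have hmem : x ∈ Set.Ioo (-r) r := by constructor <;> [linarith [neg_abs_le x]; linarith [le_abs_self x]]
  have h0 : (0:ℝ) ∈ Set.Ioo (-r) r := by constructor <;> simp [hr0] <;> linarith
  have hder : ∀ n : ℕ, ∀ y ∈ Set.Ioo (-r) r,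
      HasDerivAt (fun y : ℝ => aa n * ((2*(n:ℝ)+1) * y^(2*n)))
        ((aa n * (2*(n:ℝ)+1)) * ((2*(n:ℝ)) * y^(2*n-1))) y := by
    intro n y _
    have h2 := (hasDerivAt_pow (2*n) y).const_mul (aa n * (2*(n:ℝ)+1))
    have hfe : (fun y : ℝ => aa n * (2*(n:ℝ)+1) * y^(2*n))
        = (fun y : ℝ => aa n * ((2*(n:ℝ)+1) * y^(2*n))) := by funext z; ring
    rw [hfe] at h2
    simpa [mul_assoc] using h2
  have hbd : ∀ n : ℕ, ∀ y ∈ Set.Ioo (-r) r,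
      ‖(aa n * (2*(n:ℝ)+1)) * ((2*(n:ℝ)) * y^(2*n-1))‖ ≤ ((2*(n:ℝ)+1) * (1/2)) * ((2*(n:ℝ)) * r^(2*n-1)) := by
    intro n y hy
    have hyr : |y| ≤ r := by
      rw [abs_le]; exact ⟨le_of_lt hy.1, le_of_lt hy.2⟩
    rw [norm_mul, norm_mul, norm_mul, norm_pow, Real.norm_eq_abs, Real.norm_eq_abs,
      Real.norm_eq_abs, Real.norm_eq_abs,
      abs_of_nonneg (by positivity : (0:ℝ) ≤ 2*(n:ℝ)+1),
      abs_of_nonneg (by positivity : (0:ℝ) ≤ 2*(n:ℝ))]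
    have h1 : |aa n| * (2*(n:ℝ)+1) ≤ (2*(n:ℝ)+1) * (1/2) := by
      rw [mul_comm]
      exact mul_le_mul_of_nonneg_left (abs_aa n) (by positivity)
    have h2 : (2*(n:ℝ)) * |y|^(2*n-1) ≤ (2*(n:ℝ)) * r^(2*n-1) :=
      mul_le_mul_of_nonneg_left (pow_le_pow_left₀ (abs_nonneg y) hyr _) (by positivity)
    apply mul_le_mul h1 h2 (by positivity) (by positivity)
  have hsum0 : Summable (fun n : ℕ => aa n * ((2*(n:ℝ)+1) * (0:ℝ)^(2*n))) := by
    apply summable_of_ne_finset_zero (s := {0})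
    intro n hn
    simp only [Finset.mem_singleton] at hn
    rw [zero_pow (by omega : 2*n ≠ 0)]
    ring
  exact hasDerivAt_tsum_of_isPreconnected (sum_u2 hr0 hr1) ht hcv hder hbd h0 hsum0 hmem

lemma sumQ {x : ℝ} (hx : |x| < 1) : Summable (fun n : ℕ => aa n * ((2*(n:ℝ)+1) * x^(2*n))) := by
  apply Summable.of_norm
  apply (sum_u1 (abs_nonneg x) hx).of_nonneg_of_le (fun n => norm_nonneg _)
  intro n
  rw [norm_mul, norm_mul, norm_pow, Real.norm_eq_abs, Real.norm_eq_abs, Real.norm_eq_abs,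
    abs_of_nonneg (by positivity : (0:ℝ) ≤ 2*(n:ℝ)+1)]
  calc |aa n| * ((2*(n:ℝ)+1) * |x|^(2*n)) ≤ (1/2) * ((2*(n:ℝ)+1) * |x|^(2*n)) :=
        mul_le_mul_of_nonneg_right (abs_aa n) (by positivity)
    _ = (2*(n:ℝ)+1) * (1/2) * |x|^(2*n) := by ring

lemma sumW {x : ℝ} (hx : |x| < 1) :
    Summable (fun n : ℕ => (aa n * (2*(n:ℝ)+1)) * ((2*(n:ℝ)) * x^(2*n-1))) := by
  set r : ℝ := (1+|x|)/2 with hr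
  have hr0 : 0 < r := by positivity
  have hr1 : r < 1 := by rw [hr]; linarith
  have hxr : |x| ≤ r := by rw [hr]; linarith
  apply Summable.of_norm
  apply (sum_u2 hr0 hr1).of_nonneg_of_le (fun n => norm_nonneg _)
  intro n
  rw [norm_mul, norm_mul, norm_mul, norm_pow, Real.norm_eq_abs, Real.norm_eq_abs,
    Real.norm_eq_abs, Real.norm_eq_abs,
    abs_of_nonneg (by positivity : (0:ℝ) ≤ 2*(n:ℝ)+1),
    abs_of_nonneg (by positivity : (0:ℝ) ≤ 2*(n:ℝ))]
  have h1 : |aa n| * (2*(n:ℝ)+1) ≤ (2*(n:ℝ)+1) * (1/2) := by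
    rw [mul_comm]; exact mul_le_mul_of_nonneg_left (abs_aa n) (by positivity)
  have h2 : (2*(n:ℝ)) * |x|^(2*n-1) ≤ (2*(n:ℝ)) * r^(2*n-1) :=
    mul_le_mul_of_nonneg_left (pow_le_pow_left₀ (abs_nonneg x) hxr _) (by positivity)
  exact mul_le_mul h1 h2 (by positivity) (by positivity)

lemma ode {x : ℝ} (hx : |x| < 1) :
    (1 - x^2) * WW x - x * QQ x + (4/9) * PP x = 0 := by
  set SA : ℕ → ℝ := fun n => (aa n * (2*(n:ℝ)+1)) * ((2*(n:ℝ)) * x^(2*n-1)) with hSA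
  set e1 : ℕ → ℝ := fun n => (2*(n:ℝ)+2)*(2*(n:ℝ)+3)*aa (n+1) * x^(2*n+1) with he1
  set e2 : ℕ → ℝ := fun n => (2*(n:ℝ))*(2*(n:ℝ)+1)*aa n * x^(2*n+1) with he2
  set e3 : ℕ → ℝ := fun n => (2*(n:ℝ)+1)*aa n * x^(2*n+1) with he3
  set e4 : ℕ → ℝ := fun n => (4/9)*aa n * x^(2*n+1) with he4
  have hA : Summable SA := sumW hx
  have hE1 : Summable e1 := by
    apply ((summable_nat_add_iff 1).2 hA).congr
    intro n
    simp only [hSA, he1]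
    push_cast
    rw [show 2*(n+1)-1 = 2*n+1 by omega]
    push_cast; ring
  have hE2 : Summable e2 := by
    apply (hA.mul_left (x^2)).congr
    intro n
    rcases Nat.eq_zero_or_pos n with h0 | h0
    · subst h0; simp [hSA, he2]
    · simp only [hSA, he2]
      rw [show 2*n+1 = (2*n-1)+2 by omega, pow_add]
      ring
  have hE3 : Summable e3 := by
    apply ((sumQ hx).mul_left x).congr
    intro n
    simp only [he3]
    rw [pow_succ]
    ring
  have hE4 : Summable e4 := by
    apply ((sumP hx).mul_left (4/9)).congr
    intro n
    simp only [he4]; ring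
  have hWe1 : WW x = ∑' n, e1 n := by
    rw [WW, ← hSA, hA.tsum_eq_zero_add]
    have hz : SA 0 = 0 := by simp [hSA]
    rw [hz, zero_add]
    apply tsum_congr
    intro n
    simp only [hSA, he1]
    push_cast
    rw [show 2*(n+1)-1 = 2*n+1 by omega]
    push_cast; ring
  have hWe2 : x^2 * WW x = ∑' n, e2 n := by
    rw [WW, ← hSA, ← tsum_mul_left]
    apply tsum_congr
    intro n
    rcases Nat.eq_zero_or_pos n with h0 | h0
    · subst h0; simp [hSA, he2]
    · simp only [hSA, he2]
      rw [show 2*n+1 = (2*n-1)+2 by omega, pow_add]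
      ring
  have hQe3 : x * QQ x = ∑' n, e3 n := by
    rw [QQ, ← tsum_mul_left]
    apply tsum_congr
    intro n
    simp only [he3]
    rw [pow_succ]
    ring
  have hPe4 : (4/9) * PP x = ∑' n, e4 n := by
    rw [PP, ← tsum_mul_left]
    apply tsum_congr
    intro n
    simp only [he4]; ring
  have key : ∀ n : ℕ, e1 n - e2 n - e3 n + e4 n = 0 := by
    intro n
    simp only [he1, he2, he3, he4]
    rw [aa_succ n]
    have hd1 : (18*((n:ℝ)+1)*(2*(n:ℝ)+3)) ≠ 0 := by positivity
    field_simp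
    ring
  have : (1 - x^2) * WW x - x * QQ x + (4/9) * PP x
      = (∑' n, e1 n) - (∑' n, e2 n) - (∑' n, e3 n) + (∑' n, e4 n) := by
    rw [← hWe1, ← hWe2, ← hQe3, ← hPe4]; ring
  rw [this, ← hE1.tsum_sub hE2, ← (hE1.sub hE2).tsum_sub hE3,
    ← ((hE1.sub hE2).sub hE3).tsum_add hE4]
  calc (∑' n, (e1 n - e2 n - e3 n + e4 n)) = ∑' (_ : ℕ), (0:ℝ) := tsum_congr key
    _ = 0 := tsum_zero

lemma P_zero : PP 0 = 0 := by
  rw [PP]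
  have : ∀ n : ℕ, aa n * (0:ℝ)^(2*n+1) = 0 := by
    intro n; rw [zero_pow (by omega : 2*n+1 ≠ 0), mul_zero]
  rw [tsum_congr this, tsum_zero]

lemma Q_zero : QQ 0 = 1/2 := by
  rw [QQ, tsum_eq_single 0]
  · simp [aa_zero]
  · intro n hn
    rw [zero_pow (by omega : 2*n ≠ 0)]
    ring

lemma abs_sin_lt_one {t : ℝ} (ht : t ∈ Ioo (-(π/2)) (π/2)) : |sin t| < 1 := by
  rw [abs_lt]
  constructor
  · have h := sin_lt_sin_of_lt_of_le_pi_div_two (x := -(π/2)) (y := t)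
      le_rfl (le_of_lt ht.2) ht.1
    rw [sin_neg, sin_pi_div_two] at h
    linarith
  · have h := sin_lt_sin_of_lt_of_le_pi_div_two (x := t) (y := π/2)
      (le_of_lt ht.1) le_rfl ht.2
    rwa [sin_pi_div_two] at h

lemma sine_id {θ : ℝ} (hθ : θ ∈ Ioo (-(π/2)) (π/2)) :
    PP (sin θ) = (3/4) * sin ((2/3)*θ) := by
  set s : Set ℝ := Ioo (-(π/2)) (π/2) with hs
  have h0s : (0:ℝ) ∈ s := by
    constructor <;> simp [pi_pos] <;> linarith [pi_pos]
  -- auxiliary functions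
  set B : ℝ → ℝ := fun t => PP (sin t) * cos ((2/3)*t)
      - (cos t * QQ (sin t)) * sin ((2/3)*t) * (3/2) with hB
  set C : ℝ → ℝ := fun t => PP (sin t) * sin ((2/3)*t)
      + (cos t * QQ (sin t)) * cos ((2/3)*t) * (3/2) with hC
  -- derivatives of components
  have hh1 : ∀ t ∈ s, HasDerivAt (fun u => PP (sin u)) (cos t * QQ (sin t)) t := by
    intro t ht
    have := (hasDerivP (abs_sin_lt_one ht)).comp t (hasDerivAt_sin t)
    simpa [mul_comm, Function.comp_def] using this
  have hh2 : ∀ t ∈ s, HasDerivAt (fun u => cos u * QQ (sin u))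
      (-(4/9) * PP (sin t)) t := by
    intro t ht
    have hq : HasDerivAt (fun u => QQ (sin u)) (WW (sin t) * cos t) t :=
      (hasDerivQ (abs_sin_lt_one ht)).comp t (hasDerivAt_sin t)
    have hprod := (hasDerivAt_cos t).mul hq
    have heq : -sin t * QQ (sin t) + cos t * (WW (sin t) * cos t)
        = -(4/9) * PP (sin t) := by
      have hode := ode (abs_sin_lt_one ht)
      have hc2 : cos t ^ 2 = 1 - sin t ^ 2 := cos_sq' t
      linear_combination hode + WW (sin t) * hc2
    rwa [heq] at hprod
  have hsin23 : ∀ t : ℝ, HasDerivAt (fun u : ℝ => sin ((2/3)*u)) ((2/3) * cos ((2/3)*t)) t := by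
    intro t
    have h1 : HasDerivAt (fun u : ℝ => (2/3:ℝ)*u) ((2/3:ℝ)*1) t := (hasDerivAt_id t).const_mul (2/3)
    have h2 : HasDerivAt (fun u : ℝ => sin ((2/3)*u)) (cos ((2/3)*t) * ((2/3)*1)) t :=
      (hasDerivAt_sin ((2/3)*t)).comp t h1
    have h3 : cos ((2/3)*t) * ((2/3)*1) = (2/3) * cos ((2/3)*t) := by ring
    rwa [h3] at h2
  have hcos23 : ∀ t : ℝ, HasDerivAt (fun u : ℝ => cos ((2/3)*u)) (-(2/3) * sin ((2/3)*t)) t := by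
    intro t
    have h1 : HasDerivAt (fun u : ℝ => (2/3:ℝ)*u) ((2/3:ℝ)*1) t := (hasDerivAt_id t).const_mul (2/3)
    have h2 : HasDerivAt (fun u : ℝ => cos ((2/3)*u)) (-sin ((2/3)*t) * ((2/3)*1)) t :=
      (hasDerivAt_cos ((2/3)*t)).comp t h1
    have h3 : -sin ((2/3)*t) * ((2/3)*1) = -(2/3) * sin ((2/3)*t) := by ring
    rwa [h3] at h2
  -- B and C have zero derivative on s
  have hBder : ∀ t ∈ s, HasDerivAt B 0 t := by
    intro t ht
    have hd := (((hh1 t ht).mul (hcos23 t)).sub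
      ((((hh2 t ht).mul (hsin23 t))).mul_const (3/2)))
    have : cos t * QQ (sin t) * cos ((2/3)*t) + PP (sin t) * (-(2/3) * sin ((2/3)*t))
        - (-(4/9) * PP (sin t) * sin ((2/3)*t)
            + cos t * QQ (sin t) * ((2/3) * cos ((2/3)*t))) * (3/2) = 0 := by ring
    rwa [this] at hd
  have hCder : ∀ t ∈ s, HasDerivAt C 0 t := by
    intro t ht
    have hd := (((hh1 t ht).mul (hsin23 t)).add
      ((((hh2 t ht).mul (hcos23 t))).mul_const (3/2)))
    have : cos t * QQ (sin t) * sin ((2/3)*t) + PP (sin t) * ((2/3) * cos ((2/3)*t))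
        + (-(4/9) * PP (sin t) * cos ((2/3)*t)
            + cos t * QQ (sin t) * (-(2/3) * sin ((2/3)*t))) * (3/2) = 0 := by ring
    rwa [this] at hd
  -- constancy via FTC
  have husub : uIcc 0 θ ⊆ s := (ordConnected_Ioo).uIcc_subset h0s hθ
  have hBconst : B θ = B 0 := by
    have h := intervalIntegral.integral_eq_sub_of_hasDerivAt
      (f := B) (f' := fun _ => (0:ℝ))
      (fun t ht' => hBder t (husub ht')) (intervalIntegrable_const)
    simp only [intervalIntegral.integral_zero] at h
    linarith [h]
  have hCconst : C θ = C 0 := by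
    have h := intervalIntegral.integral_eq_sub_of_hasDerivAt
      (f := C) (f' := fun _ => (0:ℝ))
      (fun t ht' => hCder t (husub ht')) (intervalIntegrable_const)
    simp only [intervalIntegral.integral_zero] at h
    linarith [h]
  have hB0 : B 0 = 0 := by
    simp [hB, P_zero]
  have hC0 : C 0 = 3/4 := by
    simp [hC, P_zero, Q_zero]
    norm_num
  -- reconstruct
  have hpyth := sin_sq_add_cos_sq ((2/3)*θ)
  have hrec : PP (sin θ) = B θ * cos ((2/3)*θ) + C θ * sin ((2/3)*θ) := by
    simp only [hB, hC]
    linear_combination (-(PP (Real.sin θ))) * hpyth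
  rw [hrec, hBconst, hCconst, hB0, hC0]
  ring

lemma sum_target : Summable (fun n : ℕ => aa n / (2*(n:ℝ)+3)) := by
  have hb : Summable (fun n : ℕ => 1/((n:ℝ)+1)^2) := by
    have h0 : Summable (fun n : ℕ => 1/(n:ℝ)^2) := by
      simpa using Real.summable_one_div_nat_pow.2 (by norm_num : 1 < 2)
    have := (summable_nat_add_iff 1).2 h0
    apply this.congr
    intro n; push_cast; ring
  apply hb.of_nonneg_of_le
  · intro n
    have := aa_nonneg n
    positivity
  · intro n
    have h1 : aa n / (2*(n:ℝ)+3) ≤ (1/(2*(2*(n:ℝ)+1))) / (2*(n:ℝ)+3) := by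
      gcongr
      exact aa_le n
    have h2 : (1/(2*(2*(n:ℝ)+1))) / (2*(n:ℝ)+3) = 1/((2*(2*(n:ℝ)+1)) * (2*(n:ℝ)+3)) := by
      field_simp
    have h3 : (1:ℝ)/((2*(2*(n:ℝ)+1)) * (2*(n:ℝ)+3)) ≤ 1/((n:ℝ)+1)^2 := by
      gcongr
      nlinarith [Nat.cast_nonneg (α := ℝ) n]
    linarith [h1, h2 ▸ h1, h3]

-- the weighted sum as an integral
lemma hasSum_int : HasSum (fun n : ℕ => aa n / (2*(n:ℝ)+3))
    (∫ θ in Ioo 0 (π/2), (∑' n : ℕ, aa n * sin θ^(2*n+2) * cos θ)) := by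
  set f : ℕ → ℝ → ℝ := fun n θ => aa n * sin θ^(2*n+2) * cos θ with hf
  have hcont : ∀ n, Continuous (f n) := by
    intro n
    exact ((continuous_const.mul ((continuous_sin.pow _))).mul continuous_cos)
  have hint : ∀ n, Integrable (f n) (volume.restrict (Ioo 0 (π/2))) := by
    intro n
    rw [← IntegrableOn]
    exact ((hcont n).continuousOn.integrableOn_Icc).mono_set Ioo_subset_Icc_self
  have hderF : ∀ n : ℕ, ∀ θ : ℝ, HasDerivAt (fun u => (aa n/(2*(n:ℝ)+3)) * sin u^(2*n+3)) (f n θ) θ := by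
    intro n θ
    have h1 : HasDerivAt (fun u : ℝ => sin u^(2*n+3))
        (((2*n+3 : ℕ):ℝ) * sin θ^(2*n+3-1) * cos θ) θ := by
      have := (hasDerivAt_pow (2*n+3) (sin θ)).comp θ (hasDerivAt_sin θ)
      simpa [mul_assoc, Function.comp_def] using this
    have h2 := h1.const_mul (aa n/(2*(n:ℝ)+3))
    have h3 : aa n/(2*(n:ℝ)+3) * (((2*n+3 : ℕ):ℝ) * sin θ^(2*n+3-1) * cos θ) = f n θ := by
      rw [show 2*n+3-1 = 2*n+2 by omega, hf]
      have hd : (2*(n:ℝ)+3) ≠ 0 := by positivity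
      push_cast
      field_simp
    rwa [h3] at h2
  have hval : ∀ n : ℕ, ∫ θ in Ioo 0 (π/2), f n θ = aa n / (2*(n:ℝ)+3) := by
    intro n
    rw [← integral_Ioc_eq_integral_Ioo, ← intervalIntegral.integral_of_le (by positivity : (0:ℝ) ≤ π/2)]
    rw [intervalIntegral.integral_eq_sub_of_hasDerivAt (fun θ _ => hderF n θ)
      ((hcont n).intervalIntegrable 0 (π/2))]
    simp [sin_pi_div_two]
  have hnonneg : ∀ n : ℕ, ∀ θ ∈ Ioo 0 (π/2), 0 ≤ f n θ := by
    intro n θ hθ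
    have h1 : 0 ≤ sin θ := sin_nonneg_of_nonneg_of_le_pi (le_of_lt hθ.1) (by linarith [hθ.2, pi_pos])
    have h2 : 0 ≤ cos θ := cos_nonneg_of_mem_Icc ⟨by linarith [hθ.1, pi_pos], le_of_lt hθ.2⟩
    have := aa_nonneg n
    positivity
  have hnormint : ∀ n : ℕ, ∫ θ in Ioo 0 (π/2), ‖f n θ‖ = aa n / (2*(n:ℝ)+3) := by
    intro n
    rw [← hval n]
    apply setIntegral_congr_fun measurableSet_Ioo
    intro θ hθ
    exact norm_of_nonneg (hnonneg n θ hθ)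
  have hsumnorm : Summable (fun n => ∫ θ in Ioo 0 (π/2), ‖f n θ‖) := by
    apply (sum_target).congr
    intro n
    rw [hnormint n]
  have h := hasSum_integral_of_summable_integral_norm hint hsumnorm
  have h2 : (fun n => ∫ θ in Ioo 0 (π/2), f n θ) = fun n => aa n / (2*(n:ℝ)+3) := funext hval
  rwa [h2] at h

lemma integrand_id : ∀ θ ∈ Ioo 0 (π/2),
    (∑' n : ℕ, aa n * sin θ^(2*n+2) * cos θ) = (3/4) * sin ((2/3)*θ) * (sin θ * cos θ) := by
  intro θ hθ
  have hθ' : θ ∈ Ioo (-(π/2)) (π/2) := ⟨by linarith [hθ.1, pi_pos], hθ.2⟩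
  have habs : |sin θ| < 1 := by
    rw [abs_lt]
    constructor
    · have := neg_one_lt_zero.trans_le (sin_nonneg_of_nonneg_of_le_pi (le_of_lt hθ.1) (by linarith [hθ.2, pi_pos]))
      linarith [this]
    · have h := Real.sin_lt_sin_of_lt_of_le_pi_div_two (x := θ) (y := π/2) (le_of_lt hθ'.1) le_rfl hθ.2
      rwa [sin_pi_div_two] at h
  have step1 : ∀ n : ℕ, aa n * sin θ^(2*n+2) * cos θ = (aa n * sin θ^(2*n+1)) * (sin θ * cos θ) := by
    intro n
    rw [show 2*n+2 = (2*n+1)+1 by omega, pow_succ]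
    ring
  rw [tsum_congr step1, tsum_mul_right, ← PP, sine_id hθ']

lemma final_integral :
    ∫ θ in Ioo 0 (π/2), (3/4) * sin ((2/3)*θ) * (sin θ * cos θ)
      = 27 * Real.sqrt 3 / 256 := by
  have hle : (0:ℝ) ≤ π/2 := by positivity
  rw [← integral_Ioc_eq_integral_Ioo, ← intervalIntegral.integral_of_le hle]
  set A : ℝ → ℝ := fun θ => (9/64) * sin ((4/3)*θ) - (9/128) * sin ((8/3)*θ) with hA
  have hder : ∀ θ : ℝ, HasDerivAt A ((3/4) * sin ((2/3)*θ) * (sin θ * cos θ)) θ := by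
    intro θ
    have hs1 : HasDerivAt (fun u : ℝ => sin ((4/3)*u)) (cos ((4/3)*θ) * ((4/3)*1)) θ :=
      (hasDerivAt_sin ((4/3)*θ)).comp θ ((hasDerivAt_id θ).const_mul (4/3))
    have hs2 : HasDerivAt (fun u : ℝ => sin ((8/3)*u)) (cos ((8/3)*θ) * ((8/3)*1)) θ :=
      (hasDerivAt_sin ((8/3)*θ)).comp θ ((hasDerivAt_id θ).const_mul (8/3))
    have hd := (hs1.const_mul (9/64 : ℝ)).sub (hs2.const_mul (9/128 : ℝ))
    have hcc := cos_sub_cos ((4/3)*θ) ((8/3)*θ)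
    have e1 : ((4/3)*θ + (8/3)*θ)/2 = 2*θ := by ring
    have e2 : ((4/3)*θ - (8/3)*θ)/2 = -((2/3)*θ) := by ring
    rw [e1, e2, sin_neg] at hcc
    have hs2m := sin_two_mul θ
    have heq : 9/64 * (cos ((4/3)*θ) * ((4/3)*1)) - 9/128 * (cos ((8/3)*θ) * ((8/3)*1))
        = (3/4) * sin ((2/3)*θ) * (sin θ * cos θ) := by
      linear_combination (3/16) * hcc + (3/8) * sin ((2/3)*θ) * hs2m
    rwa [heq] at hd
  rw [intervalIntegral.integral_eq_sub_of_hasDerivAt (fun θ _ => hder θ)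
    (((continuous_const.mul (continuous_sin.comp (continuous_const.mul continuous_id))).mul
      (continuous_sin.mul continuous_cos)).intervalIntegrable 0 (π/2))]
  have e3 : (4/3) * (π/2) = π - π/3 := by ring
  have e4 : (8/3) * (π/2) = π/3 + π := by ring
  rw [hA]
  simp only [e3, e4, sin_pi_sub, Real.sin_add_pi, sin_pi_div_three]
  norm_num
  ring


theorem S_weighted_sum :
    HasSum (fun n : ℕ => S n / ((2 * n + 3) * 108 ^ n)) (27 * Real.sqrt 3 / 256) := by
  have h1 := hasSum_int
  have h2 : ∫ θ in Ioo 0 (π/2), (∑' n : ℕ, aa n * sin θ^(2*n+2) * cos θ)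
      = 27 * Real.sqrt 3 / 256 := by
    rw [setIntegral_congr_fun measurableSet_Ioo (fun θ hθ => integrand_id θ hθ)]
    exact final_integral
  rw [h2] at h1
  have h3 : (fun n : ℕ => S n / ((2 * (n:ℝ) + 3) * 108 ^ n))
      = fun n : ℕ => aa n / (2*(n:ℝ)+3) := by
    funext n
    rw [aa, div_div, mul_comm]
  rw [h3]
  exact h1
end
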